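/- arXiv:1505.02985 — 2 statements merged into one kernel-verified Lean document; each statement's English description precedes it below -/
import Mathlib

section
/- There is an absolute constant c > 0 such that the following holds. Let d+ > d− > 0 satisfy d+ − d− ≥ c√(d+ ln d+) with d+ bounded below by a sufficiently large absolute constant, let G be a locally finite graph with σ : V(G) → {±1}, let C be the core, and let v be a vertex such that G_v is a finite tree. Then for every u ∈ C_v \ {v} with h_{u→v} ≥ 1 and z = μ*_{u→v} ∈ {−1, 1}: cut(G_{u→v}, σ^{−z}_{u→v}) − cut(G_{u→v}, σ^z_{u→v}) = |Σ_{w∈∂u\{u_{↑v}}} μ*_{w→v}|. -/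
open Filter Topology

attribute [local instance] Classical.propDecidable

set_option linter.unusedVariables false

noncomputable section


/-! ### Basic functions -/

/-- The clamping function `ψ` restricted to the integers. -/
def psiZ (x : ℤ) : ℤ := max (-1) (min 1 x)

/-- The threshold function `ψ̃` restricted to the integers. -/
def tpsiZ (x : ℤ) : ℤ := if x ≤ -1 then -1 else 1

/-- `p : ℤ → ℝ` represents a probability measure on `{-1, 0, 1}`. -/
def IsProbOn3 (p : ℤ → ℝ) : Prop :=
  (∀ z, 0 ≤ p z) ∧ (∀ z : ℤ, z ∉ ({-1, 0, 1} : Set ℤ) → p z = 0) ∧ p (-1) + p 0 + p 1 = 1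

/-- `p` is skewed: `p(1) ≥ 1 - d₊⁻¹⁰`. -/
def Skewed (dp : ℝ) (p : ℤ → ℝ) : Prop := 1 - (dp ^ 10)⁻¹ ≤ p 1

/-- The point mass at `1`, i.e. `(0,0,1)`. -/
def delta1 : ℤ → ℝ := fun z => if z = 1 then 1 else 0

/-! ### The operator `T` -/

/-- Convolution of two mass functions on `ℤ`. -/
def convZ (a b : ℤ → ℝ) : ℤ → ℝ := fun z => ∑' w : ℤ, a w * b (z - w)

/-- `n`-fold convolution power (distribution of a sum of `n` i.i.d. copies). -/
def convPow (a : ℤ → ℝ) : ℕ → ℤ → ℝ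
  | 0 => fun z => if z = 0 then 1 else 0
  | n + 1 => convZ (convPow a n) a

/-- Poisson mass function with mean `d`. -/
def poisP (d : ℝ) (k : ℕ) : ℝ := Real.exp (-d) * d ^ k / (Nat.factorial k)

/-- Distribution of `-η` when `η` has distribution `a`. -/
def flipM (a : ℤ → ℝ) : ℤ → ℝ := fun z => a (-z)

/-- The distribution of `Z_p = ∑_{i=1}^{γ₊} η_i - ∑_{i=γ₊+1}^{γ₊+γ₋} η_i` where the `η_i`
are i.i.d. with distribution `p` and `γ₊ ~ Po(d₊)`, `γ₋ ~ Po(d₋)` are independent. -/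
def Zdist (dp dm : ℝ) (p : ℤ → ℝ) : ℤ → ℝ := fun z =>
  ∑' k : ℕ, ∑' l : ℕ, poisP dp k * poisP dm l * convZ (convPow p k) (convPow (flipM p) l) z

/-- The operator `𝒯 = 𝒯_{d₊,d₋}`: the distribution of `ψ(Z_p)`. -/
def Twp (dp dm : ℝ) (p : ℤ → ℝ) : ℤ → ℝ := fun z =>
  if z = 1 then ∑' m : ℕ, Zdist dp dm p (1 + (m : ℤ))
  else if z = 0 then Zdist dp dm p 0
  else if z = -1 then ∑' m : ℕ, Zdist dp dm p (-1 - (m : ℤ))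
  else 0

/-- The value `Z` as a function of the outcomes `η : Fin (k+l) → ℤ`, where the first `k`
coordinates form the `γ₊`-group and the remaining `l` the `γ₋`-group. -/
def zsum (k l : ℕ) (η : Fin (k + l) → ℤ) : ℤ :=
  (∑ j ∈ Finset.univ.filter (fun j : Fin (k + l) => (j : ℕ) < k), η j)
    - ∑ j ∈ Finset.univ.filter (fun j : Fin (k + l) => k ≤ (j : ℕ)), η j

/-- Conditional expectation of
`∑_{i=1}^{γ₊} 1{η_i = -ψ̃(Z)} + ∑_{i=γ₊+1}^{γ₊+γ₋} 1{η_i = ψ̃(Z)}` given `γ₊ = k, γ₋ = l`. -/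
def innerPhi (p : ℤ → ℝ) (k l : ℕ) : ℝ :=
  ∑ η ∈ Fintype.piFinset (fun _ : Fin (k + l) => ({-1, 0, 1} : Finset ℤ)),
    (∏ i, p (η i)) *
      (((Finset.univ.filter (fun i : Fin (k + l) =>
            (i : ℕ) < k ∧ η i = - tpsiZ (zsum k l η))).card : ℝ)
        + ((Finset.univ.filter (fun i : Fin (k + l) =>
            k ≤ (i : ℕ) ∧ η i = tpsiZ (zsum k l η))).card : ℝ))

/-- The functional `φ_{d₊,d₋}`. -/
def phiOp (dp dm : ℝ) (p : ℤ → ℝ) : ℝ :=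
  (1 / 2) * ∑' k : ℕ, ∑' l : ℕ, poisP dp k * poisP dm l * innerPhi p k l

/-! ### The L¹-Wasserstein distance on measures on `{-1,0,1}` -/

/-- `ℓ₁(p,q)`: infimum of `E |X - Y|` over couplings of `p` and `q`. -/
def ell1 (p q : ℤ → ℝ) : ℝ :=
  sInf { r | ∃ ν : ℤ × ℤ → ℝ, (∀ x y, 0 ≤ ν (x, y)) ∧
    (∀ x, ∑ y ∈ ({-1, 0, 1} : Finset ℤ), ν (x, y) = p x) ∧
    (∀ y, ∑ x ∈ ({-1, 0, 1} : Finset ℤ), ν (x, y) = q y) ∧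
    r = ∑ x ∈ ({-1, 0, 1} : Finset ℤ), ∑ y ∈ ({-1, 0, 1} : Finset ℤ),
          |(x : ℝ) - (y : ℝ)| * ν (x, y) }





/-! ### Graphs: restriction, cuts, the core, Warning Propagation -/

/-- Every neighbourhood in a graph on a finite vertex type is finite. -/
noncomputable instance fintypeNeighborSet {V : Type*} [Fintype V] (G : SimpleGraph V) (v : V) :
    Fintype (G.neighborSet v) := Fintype.ofFinite _

/-- The subgraph of `G` consisting of the edges inside `S` (the induced subgraph on `S`,
viewed as a graph on the ambient vertex set; vertices outside `S` are isolated). -/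
def restrictG {V : Type*} (G : SimpleGraph V) (S : Set V) : SimpleGraph V where
  Adj x y := G.Adj x y ∧ x ∈ S ∧ y ∈ S
  symm := ⟨fun x y h => ⟨G.adj_symm h.1, h.2.2, h.2.1⟩⟩
  loopless := ⟨fun x h => G.irrefl h.1⟩

/-- `cut(G, σ)` for the boundary condition `σ` on `U`: the least number of edges of `G` joining
vertices of different colours, over all `±1`-colourings `τ` agreeing with `σ` on `U`.
(The set of ordered pairs of adjacent bichromatic vertices has twice the size of the
corresponding edge set.) -/
def cutW {V : Type*} (G : SimpleGraph V) (U : Set V) (σ : V → ℤ) : ℕ :=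
  sInf { k | ∃ τ : V → ℤ, (∀ x, τ x = 1 ∨ τ x = -1) ∧ (∀ x ∈ U, τ x = σ x) ∧
    2 * k = {p : V × V | G.Adj p.1 p.2 ∧ τ p.1 ≠ τ p.2}.ncard }

/-- The defining property of the core. -/
def CoreProp {V : Type*} (G : SimpleGraph V) (σ : V → ℤ) (dp dm c : ℝ) (U : Set V) : Prop :=
  ∀ u ∈ U,
    |(({w | G.Adj u w ∧ σ u * σ w = 1}.ncard : ℝ) - dp)| ≤ c / 4 * Real.sqrt (dp * Real.log dp) ∧
    |(({w | G.Adj u w ∧ σ u * σ w = -1}.ncard : ℝ) - dm)| ≤ c / 4 * Real.sqrt (dp * Real.log dp) ∧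
    ({w | G.Adj u w} \ U).ncard ≤ 100

/-- The core: the largest subset satisfying `CoreProp`, i.e. the union of all such subsets. -/
def coreSet {V : Type*} (G : SimpleGraph V) (σ : V → ℤ) (dp dm c : ℝ) : Set V :=
  ⋃₀ { U | CoreProp G σ dp dm c U }

/-- The sets `C_v^{(t)}`. -/
def CvStage {V : Type*} (G : SimpleGraph V) (K : Set V) (v : V) : ℕ → Set V
  | 0 => {v} ∪ {w | G.Adj v w}
  | t + 1 => CvStage G K v t ∪ ⋃ u ∈ (CvStage G K v t \ K), {w | G.Adj u w}

/-- The set `C_v = ⋃_t C_v^{(t)}`. -/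
def CvSet {V : Type*} (G : SimpleGraph V) (K : Set V) (v : V) : Set V :=
  ⋃ t, CvStage G K v t

/-- Warning Propagation messages `μ_{v→w}(t | G, σ)` with initial condition `σ` on `U`. -/
def wpMsg {V : Type*} (G : SimpleGraph V) [∀ v : V, Fintype (G.neighborSet v)]
    (U : Set V) (σ : V → ℤ) : ℕ → V → V → ℤ
  | 0, v, _ => if v ∈ U then σ v else 0
  | t + 1, v, w => psiZ (∑ u ∈ (G.neighborFinset v).erase w, wpMsg G U σ t u v)

/-- `μ_v(t|G,σ) = ∑_{w ∈ ∂v} μ_{w→v}(t|G,σ)`. -/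
def wpVal {V : Type*} (G : SimpleGraph V) [∀ v : V, Fintype (G.neighborSet v)]
    (U : Set V) (σ : V → ℤ) (t : ℕ) (v : V) : ℤ :=
  ∑ w ∈ G.neighborFinset v, wpMsg G U σ t w v

/-- The maximum distance from `w` to any vertex reachable from `w` in `G`. -/
def hgt {V : Type*} (G : SimpleGraph V) (w : V) : ℕ :=
  sSup ((G.dist w) '' { u | G.Reachable w u })

/-- `G_v`: the subgraph of `G` induced on `C_v` (ambient form). -/
def GvG {V : Type*} (G : SimpleGraph V) (K : Set V) (v : V) : SimpleGraph V :=
  restrictG G (CvSet G K v)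

/-- `w_{↑v}`: the neighbour of `w` on the path from `w` to `v` in `G_v`. -/
def parentOf {V : Type*} (G : SimpleGraph V) (K : Set V) (v w : V) : V :=
  @Classical.epsilon V ⟨v⟩ fun x =>
    (GvG G K v).Adj w x ∧ (GvG G K v).dist x v + 1 = (GvG G K v).dist w v

/-- `G_v` with the edge `{w, w_{↑v}}` removed. -/
def GdelG {V : Type*} (G : SimpleGraph V) (K : Set V) (v w : V) : SimpleGraph V :=
  (GvG G K v).deleteEdges {s(w, parentOf G K v w)}

/-- `h_{w→v}`: the maximum distance between `w` and any other vertex of `G_{w→v}`. -/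
def hdir {V : Type*} (G : SimpleGraph V) (K : Set V) (v w : V) : ℕ :=
  hgt (GdelG G K v w) w

/-- `C_{w→v}`: the vertex set of the component of `w` in `G_v` minus the edge `{w, w_{↑v}}`. -/
def Cdir {V : Type*} (G : SimpleGraph V) (K : Set V) (v w : V) : Set V :=
  { u | (GdelG G K v w).Reachable w u }

/-- `G_{w→v}`: the component of `w` in `G_v` minus the edge `{w, w_{↑v}}`. -/
def Gdir {V : Type*} (G : SimpleGraph V) (K : Set V) (v w : V) : SimpleGraph V :=
  restrictG (GdelG G K v w) (Cdir G K v w)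

/-- `h_v`: the maximum distance between `v` and any other vertex of `G_v`. -/
def hvG {V : Type*} (G : SimpleGraph V) (K : Set V) (v : V) : ℕ :=
  hgt (GvG G K v) v

/-- `μ*_{w→v} = μ_{w→w_{↑v}}(h_{w→v}+1 | G, σ)`. -/
def muStarDir {V : Type*} (G : SimpleGraph V) [∀ v : V, Fintype (G.neighborSet v)]
    (K : Set V) (σ : V → ℤ) (v w : V) : ℤ :=
  wpMsg G Set.univ σ (hdir G K v w + 1) w (parentOf G K v w)

/-- `μ*_v = μ_v(h_v+1 | G, σ)`. -/
def muStarV {V : Type*} (G : SimpleGraph V) [∀ v : V, Fintype (G.neighborSet v)]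
    (K : Set V) (σ : V → ℤ) (v : V) : ℤ :=
  wpVal G Set.univ σ (hvG G K v + 1) v

/-- The ball of radius `t` around `v` in `G`. -/
def ballSet {V : Type*} (G : SimpleGraph V) (v : V) (t : ℕ) : Set V :=
  { u | G.Reachable v u ∧ G.dist v u ≤ t }

lemma mem_ballSet_self {V : Type*} (G : SimpleGraph V) (v : V) (t : ℕ) : v ∈ ballSet G v t :=
  ⟨SimpleGraph.Reachable.refl v, by simp [SimpleGraph.dist_self]⟩

/-- `∂^t(G,r,σ) ≅ ∂^t(H,r',τ)`: a root- and label-preserving isomorphism between the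
balls of radius `t`. -/
def RootedBallIso {V W : Type*} (G : SimpleGraph V) (σ : V → ℤ) (r : V)
    (H : SimpleGraph W) (τ : W → ℤ) (r' : W) (t : ℕ) : Prop :=
  ∃ φ : (G.induce (ballSet G r t)) ≃g (H.induce (ballSet H r' t)),
    φ ⟨r, mem_ballSet_self G r t⟩ = ⟨r', mem_ballSet_self H r' t⟩ ∧
    ∀ x, τ (φ x).1 = σ x.1





/-! ### The planted bisection model -/

/-- `σ` is a balanced bipartition: the two class sizes differ by at most one. -/
def BalancedPart {n : ℕ} (σ : Fin n → Bool) : Prop :=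
  (((Finset.univ.filter (fun v => σ v = true)).card : ℤ)
    - ((Finset.univ.filter (fun v => σ v = false)).card : ℤ)).natAbs ≤ 1

/-- The number of balanced bipartitions of `Fin n`. -/
def Nbal (n : ℕ) : ℕ := (Finset.univ.filter (fun σ : Fin n → Bool => BalancedPart σ)).card

/-- The probability `p_{σ(v)σ(w)}` of the edge `{v,w}`, where `p₊ = 2d₊/n`, `p₋ = 2d₋/n`. -/
def pairProb (dp dm : ℝ) (n : ℕ) (σ : Fin n → Bool) (v w : Fin n) : ℝ :=
  if σ v = σ w then 2 * dp / n else 2 * dm / n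

/-- The probability mass of an outcome `ω = (σ, g)` of the planted bisection model
`G(n, 2d₊/n, 2d₋/n)`: `σ` is a uniformly random balanced bipartition and, independently
for each pair `v ≠ w`, the edge `{v,w}` is present with probability `p_{σ(v)σ(w)}`. -/
def pbMass (dp dm : ℝ) (n : ℕ) (ω : (Fin n → Bool) × (Fin n → Fin n → Bool)) : ℝ :=
  (if BalancedPart ω.1 ∧ (∀ v w, ω.2 v w = ω.2 w v) ∧ (∀ v, ω.2 v v = false)
    then ((Nbal n : ℝ))⁻¹ else 0) *
  ∏ p ∈ Finset.univ.filter (fun p : Fin n × Fin n => p.1 < p.2),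
    (if ω.2 p.1 p.2 = true then pairProb dp dm n ω.1 p.1 p.2
      else 1 - pairProb dp dm n ω.1 p.1 p.2)

/-- The probability of an event in the planted bisection model. -/
def pbPr (dp dm : ℝ) (n : ℕ) (A : (Fin n → Bool) × (Fin n → Fin n → Bool) → Prop) : ℝ :=
  ∑ ω ∈ Finset.univ.filter A, pbMass dp dm n ω

/-- Sign of a Boolean, as `±1`. -/
def sgnB (b : Bool) : ℤ := if b then 1 else -1

/-- The planted assignment `σ : [n] → {±1}` of an outcome. -/
def pbSigma {n : ℕ} (ω : (Fin n → Bool) × (Fin n → Fin n → Bool)) : Fin n → ℤ :=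
  fun v => sgnB (ω.1 v)

/-- The graph of an outcome. -/
def pbGraph (n : ℕ) (g : Fin n → Fin n → Bool) : SimpleGraph (Fin n) :=
  SimpleGraph.fromRel fun v w => g v w = true

/-- The minimum bisection width `bis(G)`: the least number of edges joining `S` and its
complement over all `S` with `||S| - |S̄|| ≤ 1`. -/
def bisWidth {n : ℕ} (G : SimpleGraph (Fin n)) : ℕ :=
  sInf { k | ∃ S : Finset (Fin n),
    ((S.card : ℤ) - ((n : ℤ) - (S.card : ℤ))).natAbs ≤ 1 ∧
    k = {p : Fin n × Fin n | G.Adj p.1 p.2 ∧ p.1 ∈ S ∧ p.2 ∉ S}.ncard }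

/-! ### Finite rooted typed trees and the two-type Galton–Watson tree -/

/-- Finite rooted trees whose vertices carry a type in `ℤ` (used with types `±1`). -/
inductive GWT : Type
  | node : ℤ → List GWT → GWT

instance : Inhabited GWT := ⟨.node 0 []⟩

/-- The type of the root. -/
def GWT.typeOf : GWT → ℤ
  | .node s _ => s

/-- The subtrees pending on the children of the root. -/
def GWT.childrenOf : GWT → List GWT
  | .node _ l => l

/-- Valid positions (vertices) of a tree, encoded as lists of child indices. -/
def GWT.valid : GWT → List ℕ → Prop
  | _, [] => True
  | T, i :: p => i < T.childrenOf.length ∧ GWT.valid (T.childrenOf.getD i default) p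

/-- The type of the vertex at position `q`. -/
def GWT.typeAt : GWT → List ℕ → ℤ
  | T, [] => T.typeOf
  | T, i :: p => GWT.typeAt (T.childrenOf.getD i default) p

/-- The tree as a simple graph on its set of positions. -/
def GWT.graph (T : GWT) : SimpleGraph { p : List ℕ // T.valid p } where
  Adj a b := (∃ i : ℕ, (b : List ℕ) = (a : List ℕ) ++ [i]) ∨
             (∃ i : ℕ, (a : List ℕ) = (b : List ℕ) ++ [i])
  symm := ⟨fun a b h => h.symm⟩
  loopless := ⟨fun a h => by
    rcases h with ⟨i, hi⟩ | ⟨i, hi⟩ <;>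
      · have := congrArg List.length hi
        simp at this⟩

/-- The root of the tree. -/
def GWT.root (T : GWT) : { p : List ℕ // T.valid p } := ⟨[], trivial⟩

/-- The type labelling of the vertices. -/
def GWT.lab (T : GWT) : { p : List ℕ // T.valid p } → ℤ := fun q => T.typeAt q.1

/-- The Warning Propagation message `μ_{r↑}(t)` sent by the root of a tree towards its
(imaginary) parent, when the messages are initialised with the types. -/
def GWT.rootMsg : ℕ → GWT → ℤ
  | 0, T => T.typeOf
  | t + 1, T => psiZ ((T.childrenOf.map (GWT.rootMsg t)).sum)

/-- The probability mass function of the depth-`t` truncation of the two-type Galton–Watson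
tree with root type `s`, realised as a random *ordered* tree: the root spawns `Po(d₊ + d₋)`
children, each independently of type `s` with probability `d₊/(d₊+d₋)` and of type `-s`
with probability `d₋/(d₊+d₋)`, and the subtrees pending on the children are independent
Galton–Watson trees truncated at depth `t-1`. -/
def ogwMass (dp dm : ℝ) : ℕ → ℤ → GWT → ℝ
  | 0, s, T => if T.typeOf = s ∧ T.childrenOf = [] then 1 else 0
  | t + 1, s, T =>
    if T.typeOf = s then
      Real.exp (-(dp + dm)) / (Nat.factorial T.childrenOf.length) *
        (T.childrenOf.map fun U => (if U.typeOf = s then dp else dm)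
          * ogwMass dp dm t U.typeOf U).prod
    else 0


end



set_option maxHeartbeats 1000000
set_option linter.unusedSectionVars false

section Util
variable {V : Type*}

private lemma psiZ_abs_le (x : ℤ) : |psiZ x| ≤ 1 := by unfold psiZ; rw [abs_le]; omega

private lemma psiZ_eq_one {x : ℤ} (h : 1 ≤ x) : psiZ x = 1 := by unfold psiZ; omega

private lemma psiZ_eq_neg_one {x : ℤ} (h : x ≤ -1) : psiZ x = -1 := by unfold psiZ; omega

private lemma min_sub_min (A B : ℕ) :
    ((min A (B+1) : ℕ) : ℤ) - ((min B (A+1) : ℕ) : ℤ) = psiZ ((A : ℤ) - B) := by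
  unfold psiZ; omega

private lemma even_ncard_sym (S : Set (V × V)) (hfin : S.Finite)
    (hsym : ∀ p ∈ S, (p.2, p.1) ∈ S) (hne : ∀ p ∈ S, p.1 ≠ p.2) : Even S.ncard := by
  classical
  obtain ⟨n, hn⟩ : ∃ n, S.ncard = n := ⟨_, rfl⟩
  induction n using Nat.strong_induction_on generalizing S with
  | _ n ih =>
    rcases Nat.eq_zero_or_pos n with h0 | hpos
    · rw [hn, h0]; exact Even.zero
    · have hSne : S.Nonempty := by
        exact (Set.ncard_pos hfin).mp (by omega)
      obtain ⟨⟨a, b⟩, hab⟩ := hSne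
      have hba : (b, a) ∈ S := hsym _ hab
      have hne' : a ≠ b := hne _ hab
      have hpair : ({(a,b), (b,a)} : Set (V × V)) ⊆ S := by
        intro p hp; rcases hp with hp | hp <;> simp_all
      have hpc : ({(a,b), (b,a)} : Set (V × V)).ncard = 2 := by
        rw [Set.ncard_pair]; simp [Prod.ext_iff]; exact fun h _ => hne' h
      have h2 : 2 ≤ n := by
        rw [← hn, ← hpc]; exact Set.ncard_le_ncard hpair hfin
      have hcard : (S \ {(a,b), (b,a)}).ncard = n - 2 := by
        rw [Set.ncard_diff hpair (hfin.subset hpair), hpc, hn]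
      have hev := ih (n-2) (by omega) (S \ {(a,b), (b,a)}) hfin.diff
        (fun p hp => ⟨hsym p hp.1, by
          intro hc; apply hp.2
          rcases hc with hc | hc <;> [right; left] <;>
            simp_all [Prod.ext_iff]⟩)
        (fun p hp => hne p hp.1) hcard
      rw [hcard] at hev
      obtain ⟨r, hr⟩ := hev
      rw [hn]; exact ⟨r + 1, by omega⟩

end Util

section TreeLayer

open SimpleGraph

variable {V : Type*} {G : SimpleGraph V} {K : Set V} {v : V}

private def GoodT (G : SimpleGraph V) (K : Set V) (v : V) : Prop :=
  (CvSet G K v).Finite ∧ (G.induce (CvSet G K v)).IsTree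

private def homDown (G : SimpleGraph V) (S : Set V) : G.induce S →g restrictG G S :=
  ⟨Subtype.val, fun {a b} h => ⟨h, a.2, b.2⟩⟩

private lemma walkUp (G : SimpleGraph V) (S : Set V) :
    ∀ {x y : V} (p : (restrictG G S).Walk x y) (hx : x ∈ S) (hy : y ∈ S),
    ∃ q : (G.induce S).Walk ⟨x, hx⟩ ⟨y, hy⟩, q.map (homDown G S) = p := by
  intro x y p
  induction p with
  | nil => intro hx hy; exact ⟨Walk.nil, rfl⟩
  | cons h p ih =>
    intro hx hy
    obtain ⟨q, hq⟩ := ih h.2.2 hy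
    refine ⟨Walk.cons (by exact h.1) q, ?_⟩
    subst hq; rfl

private lemma walk_support_mem {S : Set V} {x y : V} (p : (restrictG G S).Walk x y)
    (hx : x ∈ S) : ∀ z ∈ p.support, z ∈ S := by
  induction p with
  | nil =>
    intro z hz
    rw [Walk.support_nil, List.mem_singleton] at hz
    subst hz; exact hx
  | cons h p ih =>
    intro z hz
    rw [Walk.support_cons, List.mem_cons] at hz
    rcases hz with rfl | hz
    · exact hx
    · exact ih h.2.2 z hz

private lemma v_mem_CvSet : v ∈ CvSet G K v :=
  Set.mem_iUnion.mpr ⟨0, Set.mem_union_left _ rfl⟩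

private lemma stage_mono {s t : ℕ} (h : s ≤ t) : CvStage G K v s ⊆ CvStage G K v t := by
  induction h with
  | refl => exact subset_rfl
  | step _ ih => exact fun x hx => Set.mem_union_left _ (ih hx)

private lemma adj_mem_CvSet {w y : V} (hw : w ∈ CvSet G K v) (hK : w ∉ K) (h : G.Adj w y) :
    y ∈ CvSet G K v := by
  obtain ⟨t, ht⟩ := Set.mem_iUnion.mp hw
  exact Set.mem_iUnion.mpr ⟨t + 1, Set.mem_union_right _ (Set.mem_biUnion ⟨ht, hK⟩ h)⟩

private lemma reach_v (hG : GoodT G K v) {x : V} (hx : x ∈ CvSet G K v) :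
    (GvG G K v).Reachable x v := by
  have h := hG.2.isConnected.preconnected ⟨x, hx⟩ ⟨v, v_mem_CvSet⟩
  exact h.map (homDown G (CvSet G K v))

private lemma path_unique (hG : GoodT G K v) {x y : V} (hx : x ∈ CvSet G K v)
    {p q : (GvG G K v).Walk x y} (hp : p.IsPath) (hq : q.IsPath) : p = q := by
  have hy : y ∈ CvSet G K v := walk_support_mem p hx y p.end_mem_support
  obtain ⟨p', hp'⟩ := walkUp G _ p hx hy
  obtain ⟨q', hq'⟩ := walkUp G _ q hx hy
  have hpath : ∀ {r : (G.induce (CvSet G K v)).Walk ⟨x, hx⟩ ⟨y, hy⟩}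
      {r₀ : (GvG G K v).Walk x y}, r.map (homDown G _) = r₀ → r₀.IsPath → r.IsPath := by
    intro r r₀ hr hr₀
    rw [Walk.isPath_def] at hr₀ ⊢
    have hsup : r.support.map (homDown G (CvSet G K v)) = r₀.support := by
      subst hr; exact (Walk.support_map _ _).symm
    exact List.Nodup.of_map _ (hsup ▸ hr₀)
  have h1 := hpath hp' hp
  have h2 := hpath hq' hq
  have h3 := ExistsUnique.unique (hG.2.existsUnique_path ⟨x, hx⟩ ⟨y, hy⟩) h1 h2
  rw [← hp', ← hq', h3]

private lemma path_length_eq_dist (hG : GoodT G K v) {x y : V} (hx : x ∈ CvSet G K v)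
    {p : (GvG G K v).Walk x y} (hp : p.IsPath) : p.length = (GvG G K v).dist x y := by
  obtain ⟨q, hq, hql⟩ := (Reachable.exists_path_of_dist ⟨p⟩)
  rw [← hql, path_unique hG hx hp hq]

private lemma exists_parent (hG : GoodT G K v) {w : V} (hw : w ∈ CvSet G K v) (hwv : w ≠ v) :
    ∃ x, (GvG G K v).Adj w x ∧ (GvG G K v).dist x v + 1 = (GvG G K v).dist w v := by
  have hr := reach_v hG hw
  have hd : 0 < (GvG G K v).dist w v := hr.pos_dist_of_ne hwv
  obtain ⟨p, hp, hl⟩ := hr.exists_path_of_dist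
  cases p with
  | nil => rw [Walk.length_nil] at hl; omega
  | cons h p' =>
    refine ⟨_, h, ?_⟩
    have h1 := dist_le p'
    obtain ⟨q, hq, hql⟩ := (Reachable.exists_path_of_dist ⟨p'⟩)
    have h2 := dist_le (Walk.cons h q)
    rw [Walk.length_cons, hql] at h2
    rw [Walk.length_cons] at hl
    omega

private lemma parent_unique (hG : GoodT G K v) {w x₁ x₂ : V} (hw : w ∈ CvSet G K v)
    (h1 : (GvG G K v).Adj w x₁ ∧ (GvG G K v).dist x₁ v + 1 = (GvG G K v).dist w v)
    (h2 : (GvG G K v).Adj w x₂ ∧ (GvG G K v).dist x₂ v + 1 = (GvG G K v).dist w v) :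
    x₁ = x₂ := by
  have build : ∀ {x : V} (hadj : (GvG G K v).Adj w x),
      (GvG G K v).dist x v + 1 = (GvG G K v).dist w v →
      ∃ p : (GvG G K v).Walk x v, ((Walk.cons hadj p).IsPath) := by
    intro x hadj hdist
    obtain ⟨p, hp, hl⟩ := (reach_v hG hadj.2.2).exists_path_of_dist
    refine ⟨p, (Walk.cons_isPath_iff _ _).mpr ⟨hp, ?_⟩⟩
    intro hmem
    have hd := dist_le (p.dropUntil w hmem)
    have hlen := Walk.length_dropUntil_le p hmem
    omega
  obtain ⟨p₁, hp₁⟩ := build h1.1 h1.2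
  obtain ⟨p₂, hp₂⟩ := build h2.1 h2.2
  have heq := path_unique hG hw hp₁ hp₂
  have hs := congrArg Walk.support heq
  rw [Walk.support_cons, Walk.support_cons, Walk.support_eq_cons p₁,
    Walk.support_eq_cons p₂] at hs
  simp only [List.cons.injEq] at hs
  exact hs.2.1

private lemma parent_spec (hG : GoodT G K v) {w : V} (hw : w ∈ CvSet G K v) (hwv : w ≠ v) :
    (GvG G K v).Adj w (parentOf G K v w) ∧
      (GvG G K v).dist (parentOf G K v w) v + 1 = (GvG G K v).dist w v :=
  Classical.epsilon_spec (exists_parent hG hw hwv)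

private lemma adj_classify (hG : GoodT G K v) {w y : V} (hw : w ∈ CvSet G K v) (hwv : w ≠ v)
    (h : (GvG G K v).Adj w y) :
    y = parentOf G K v w ∨
      ((GvG G K v).dist y v = (GvG G K v).dist w v + 1 ∧ y ≠ v ∧ parentOf G K v y = w) := by
  by_cases hyp : y = parentOf G K v w
  · exact Or.inl hyp
  right
  have hy : y ∈ CvSet G K v := h.2.2
  have hps := parent_spec hG hw hwv
  have hd : 0 < (GvG G K v).dist w v := (reach_v hG hw).pos_dist_of_ne hwv
  -- upper bound
  obtain ⟨pw, hpw, hpwl⟩ := (reach_v hG hw).exists_path_of_dist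
  have hub : (GvG G K v).dist y v ≤ (GvG G K v).dist w v + 1 := by
    have := dist_le (Walk.cons h.symm pw)
    rw [Walk.length_cons, hpwl] at this
    exact this
  -- lower bound
  obtain ⟨py, hpy, hpyl⟩ := (reach_v hG hy).exists_path_of_dist
  have hlb : (GvG G K v).dist w v ≤ (GvG G K v).dist y v + 1 := by
    have := dist_le (Walk.cons h py)
    rw [Walk.length_cons, hpyl] at this
    exact this
  -- not equal to dist w v - 1
  have hne1 : ¬((GvG G K v).dist y v + 1 = (GvG G K v).dist w v) := by
    intro hc
    exact hyp (parent_unique hG hw ⟨h, hc⟩ hps)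
  -- not equal
  have hne2 : (GvG G K v).dist y v ≠ (GvG G K v).dist w v := by
    intro hc
    by_cases hwP : w ∈ py.support
    · have hdle := dist_le (py.dropUntil w hwP)
      have hspec := congrArg Walk.length (py.take_spec hwP)
      rw [Walk.length_append] at hspec
      have h0 : (py.takeUntil w hwP).length = 0 := by omega
      exact h.ne' (Walk.eq_of_length_eq_zero h0)
    · have hQ : (Walk.cons h py).IsPath := (Walk.cons_isPath_iff _ _).mpr ⟨hpy, hwP⟩
      have heq := path_unique hG hw hQ hpw
      have := congrArg Walk.length heq
      rw [Walk.length_cons, hpwl, hpyl] at this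
      omega
  have hyd : (GvG G K v).dist y v = (GvG G K v).dist w v + 1 := by omega
  have hynv : y ≠ v := by
    intro hc; subst hc
    rw [SimpleGraph.dist_self] at hyd; omega
  refine ⟨hyd, hynv, ?_⟩
  exact parent_unique hG hy (parent_spec hG hy hynv) ⟨h.symm, by omega⟩

end TreeLayer

section TreeLayer2

open SimpleGraph

variable {V : Type*} {G : SimpleGraph V} {K : Set V} {v : V}

/-- `y` is a child of `w` in the tree `G_v`. -/
private def IsChild (G : SimpleGraph V) (K : Set V) (v w y : V) : Prop :=
  (GvG G K v).Adj w y ∧ (GvG G K v).dist y v = (GvG G K v).dist w v + 1 ∧ y ≠ v ∧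
    parentOf G K v y = w

private lemma gdel_adj {w a b : V} :
    (GdelG G K v w).Adj a b ↔
      (GvG G K v).Adj a b ∧ s(a, b) ≠ s(w, parentOf G K v w) := by
  unfold GdelG
  rw [SimpleGraph.deleteEdges_adj, Set.mem_singleton_iff]

private lemma gdel_edgeSet {w : V} :
    (GdelG G K v w).edgeSet = (GvG G K v).edgeSet \ {s(w, parentOf G K v w)} := by
  unfold GdelG
  rw [edgeSet_deleteEdges]

private lemma adj_classify' (hG : GoodT G K v) {w y : V} (hw : w ∈ CvSet G K v) (hwv : w ≠ v)
    (h : (GvG G K v).Adj w y) : y = parentOf G K v w ∨ IsChild G K v w y := by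
  rcases adj_classify hG hw hwv h with h1 | ⟨h1, h2, h3⟩
  · exact Or.inl h1
  · exact Or.inr ⟨h, h1, h2, h3⟩

private lemma child_ne_parent (hG : GoodT G K v) {w y : V} (hw : w ∈ CvSet G K v) (hwv : w ≠ v)
    (h : IsChild G K v w y) : y ≠ parentOf G K v w := by
  intro hc
  have hps := parent_spec hG hw hwv
  rw [← hc] at hps
  have := h.2.1
  omega

private lemma del_adj_child (hG : GoodT G K v) {w y : V} (hw : w ∈ CvSet G K v) (hwv : w ≠ v)
    (h : IsChild G K v w y) : (GdelG G K v w).Adj w y := by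
  rw [gdel_adj]
  refine ⟨h.1, ?_⟩
  rw [Ne, Sym2.eq_iff]
  rintro (⟨-, h2⟩ | ⟨h1, -⟩)
  · exact child_ne_parent hG hw hwv h h2
  · exact (parent_spec hG hw hwv).1.ne (h1 ▸ rfl)

private lemma child_mem_Cdir (hG : GoodT G K v) {w y : V} (hw : w ∈ CvSet G K v) (hwv : w ≠ v)
    (h : IsChild G K v w y) : y ∈ Cdir G K v w :=
  (del_adj_child hG hw hwv h).reachable

private lemma w_mem_Cdir (w : V) : w ∈ Cdir G K v w := Reachable.refl w

private lemma Cdir_sub {w : V} (hw : w ∈ CvSet G K v) : Cdir G K v w ⊆ CvSet G K v := by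
  intro x hx
  obtain ⟨p⟩ := hx
  have hT : ∀ e ∈ p.edges, e ∈ (GvG G K v).edgeSet :=
    fun e he => (edgeSet_mono (deleteEdges_le _)) (p.edges_subset_edgeSet he)
  exact walk_support_mem (p.transfer _ hT) hw x (Walk.end_mem_support _)

private lemma mem_Cdir_of_support {w x z : V} {p : (GdelG G K v w).Walk w x}
    (hz : z ∈ p.support) : z ∈ Cdir G K v w := ⟨p.takeUntil z hz⟩

private lemma parent_not_mem_Cdir (hG : GoodT G K v) {w : V} (hw : w ∈ CvSet G K v)
    (hwv : w ≠ v) : parentOf G K v w ∉ Cdir G K v w := by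
  intro hmem
  obtain ⟨p0⟩ := hmem
  have hp : p0.bypass.IsPath := Walk.bypass_isPath p0
  set p := p0.bypass with hpdef
  have hT : ∀ e ∈ p.edges, e ∈ (GvG G K v).edgeSet :=
    fun e he => (edgeSet_mono (deleteEdges_le _)) (p.edges_subset_edgeSet he)
  have hQ : (p.transfer _ hT).IsPath := hp.transfer hT
  have hps := parent_spec hG hw hwv
  have hR : (Walk.cons hps.1 Walk.nil).IsPath := by
    rw [Walk.cons_isPath_iff]
    exact ⟨Walk.IsPath.nil, by simp [hps.1.ne]⟩
  have heq := path_unique hG hw hQ hR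
  have hedge : s(w, parentOf G K v w) ∈ (p.transfer _ hT).edges := by
    rw [heq, Walk.edges_cons, Walk.edges_nil]
    exact List.mem_singleton.mpr rfl
  rw [Walk.edges_transfer] at hedge
  have h5 := p.edges_subset_edgeSet hedge
  rw [mem_edgeSet, gdel_adj] at h5
  exact h5.2 rfl

private lemma w_not_mem_Cdir_child (hG : GoodT G K v) {w y : V} (hw : w ∈ CvSet G K v)
    (hwv : w ≠ v) (h : IsChild G K v w y) : w ∉ Cdir G K v y := by
  have := parent_not_mem_Cdir hG h.1.2.2 h.2.2.1
  rwa [h.2.2.2] at this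

private lemma Cdir_child_sub (hG : GoodT G K v) {w y : V} (hw : w ∈ CvSet G K v)
    (hwv : w ≠ v) (h : IsChild G K v w y) : Cdir G K v y ⊆ Cdir G K v w := by
  intro x hx
  obtain ⟨p0⟩ := hx
  have hp : p0.bypass.IsPath := Walk.bypass_isPath p0
  set p := p0.bypass with hpdef
  have hwsup : w ∉ p.support := by
    intro hmem
    exact w_not_mem_Cdir_child hG hw hwv h (mem_Cdir_of_support hmem)
  have hT : ∀ e ∈ p.edges, e ∈ (GdelG G K v w).edgeSet := by
    intro e he
    have h1 : e ∈ (GvG G K v).edgeSet :=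
      (edgeSet_mono (deleteEdges_le _)) (p.edges_subset_edgeSet he)
    rw [gdel_edgeSet]
    refine ⟨h1, ?_⟩
    rw [Set.mem_singleton_iff]
    intro hc
    subst hc
    exact hwsup (p.fst_mem_support_of_mem_edges he)
  exact ⟨Walk.cons (del_adj_child hG hw hwv h) (p.transfer _ hT)⟩

private lemma Cdir_decomp (hG : GoodT G K v) {w x : V} (hw : w ∈ CvSet G K v) (hwv : w ≠ v)
    (hx : x ∈ Cdir G K v w) (hxw : x ≠ w) :
    ∃ y, IsChild G K v w y ∧ x ∈ Cdir G K v y := by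
  obtain ⟨p0⟩ := hx
  have hp : p0.bypass.IsPath := Walk.bypass_isPath p0
  set p := p0.bypass with hpdef
  clear_value p
  cases p with
  | nil => exact absurd rfl hxw.symm
  | cons hadj p' =>
    rename_i y0
    rw [Walk.cons_isPath_iff] at hp
    have hy0 : y0 ≠ parentOf G K v w := by
      intro hc
      subst hc
      exact (gdel_adj.mp hadj).2 rfl
    have hchild : IsChild G K v w y0 := by
      rcases adj_classify' hG hw hwv (gdel_adj.mp hadj).1 with h1 | h1
      · exact absurd h1 hy0
      · exact h1
    refine ⟨y0, hchild, ?_⟩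
    have hT : ∀ e ∈ p'.edges, e ∈ (GdelG G K v y0).edgeSet := by
      intro e he
      have h1 : e ∈ (GvG G K v).edgeSet :=
        (edgeSet_mono (deleteEdges_le _)) (p'.edges_subset_edgeSet he)
      rw [gdel_edgeSet]
      refine ⟨h1, ?_⟩
      rw [Set.mem_singleton_iff]
      intro hc
      rw [hchild.2.2.2] at hc
      subst hc
      exact hp.2 (p'.snd_mem_support_of_mem_edges he)
    exact ⟨p'.transfer _ hT⟩

private lemma Cdir_disjoint (hG : GoodT G K v) {w y₁ y₂ x : V} (hw : w ∈ CvSet G K v)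
    (hwv : w ≠ v) (h1 : IsChild G K v w y₁) (h2 : IsChild G K v w y₂) (hne : y₁ ≠ y₂)
    (hx1 : x ∈ Cdir G K v y₁) (hx2 : x ∈ Cdir G K v y₂) : False := by
  obtain ⟨q1⟩ := hx1
  obtain ⟨q2⟩ := hx2
  have hT1 : ∀ e ∈ q1.edges, e ∈ (GvG G K v).edgeSet :=
    fun e he => (edgeSet_mono (deleteEdges_le _)) (q1.edges_subset_edgeSet he)
  have hT2 : ∀ e ∈ q2.edges, e ∈ (GvG G K v).edgeSet :=
    fun e he => (edgeSet_mono (deleteEdges_le _)) (q2.edges_subset_edgeSet he)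
  set W := (q1.transfer _ hT1).append (q2.transfer _ hT2).reverse with hW
  have hBp : W.bypass.IsPath := Walk.bypass_isPath W
  have hR : (Walk.cons h1.1.symm (Walk.cons h2.1 Walk.nil)).IsPath := by
    rw [Walk.cons_isPath_iff, Walk.cons_isPath_iff]
    exact ⟨⟨Walk.IsPath.nil, by simp [h2.1.ne]⟩, by simp [h1.1.ne', hne]⟩
  have heq := path_unique hG h1.1.2.2 hBp hR
  have hwmem : w ∈ W.bypass.support := by
    rw [heq]
    simp [Walk.support_cons]
  have hwW : w ∈ W.support := Walk.support_bypass_subset _ hwmem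
  rw [hW, Walk.mem_support_append_iff] at hwW
  rcases hwW with hc | hc
  · rw [Walk.support_transfer] at hc
    exact w_not_mem_Cdir_child hG hw hwv h1 (mem_Cdir_of_support hc)
  · rw [Walk.support_reverse, List.mem_reverse, Walk.support_transfer] at hc
    exact w_not_mem_Cdir_child hG hw hwv h2 (mem_Cdir_of_support hc)

end TreeLayer2

section TreeLayer3

open SimpleGraph

variable {V : Type*} {G : SimpleGraph V} {K : Set V} {v : V}

private lemma gdir_adj {w a b : V} :
    (Gdir G K v w).Adj a b ↔
      (GdelG G K v w).Adj a b ∧ a ∈ Cdir G K v w ∧ b ∈ Cdir G K v w := Iff.rfl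

private lemma mem_Cdir_trans {w a b : V} (ha : a ∈ Cdir G K v w)
    (hab : (GdelG G K v w).Adj a b) : b ∈ Cdir G K v w := by
  obtain ⟨p⟩ := ha
  exact ⟨p.append (Walk.cons hab Walk.nil)⟩

private lemma gdir_adj_decomp (hG : GoodT G K v) {w : V} (hw : w ∈ CvSet G K v)
    (hwv : w ≠ v) {a b : V} :
    (Gdir G K v w).Adj a b ↔
      ((a = w ∧ IsChild G K v w b) ∨ (b = w ∧ IsChild G K v w a) ∨
        (∃ y, IsChild G K v w y ∧ (Gdir G K v y).Adj a b)) := by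
  constructor
  · rintro ⟨hab, haC, hbC⟩
    have hTab := (gdel_adj.mp hab).1
    by_cases haw : a = w
    · subst haw
      left
      refine ⟨rfl, ?_⟩
      rcases adj_classify' hG hw hwv hTab with h1 | h1
      · exact absurd ((gdel_adj.mp hab).2 (by rw [h1])) (fun h => h)
      · exact h1
    by_cases hbw : b = w
    · subst hbw
      right; left
      refine ⟨rfl, ?_⟩
      rcases adj_classify' hG hw hwv hTab.symm with h1 | h1
      · exact absurd ((gdel_adj.mp hab).2 (by rw [h1, Sym2.eq_swap])) (fun h => h)
      · exact h1
    · obtain ⟨ya, hya, haya⟩ := Cdir_decomp hG hw hwv haC haw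
      obtain ⟨yb, hyb, hbyb⟩ := Cdir_decomp hG hw hwv hbC hbw
      have hwa : w ∉ ({a, b} : Set V) := by
        intro hc
        rcases hc with hc | hc <;> simp_all
      have hdelya : (GdelG G K v ya).Adj a b := by
        rw [gdel_adj]
        refine ⟨hTab, ?_⟩
        rw [hya.2.2.2, Ne, Sym2.eq_iff]
        rintro (⟨-, h2⟩ | ⟨h1, -⟩)
        · exact hbw h2
        · exact haw h1
      have hbya : b ∈ Cdir G K v ya := mem_Cdir_trans haya hdelya
      have hyab : ya = yb := by
        by_contra hc
        exact Cdir_disjoint hG hw hwv hya hyb hc hbya hbyb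
      subst hyab
      exact Or.inr (Or.inr ⟨ya, hya, hdelya, haya, hbya⟩)
  · rintro (⟨rfl, hch⟩ | ⟨rfl, hch⟩ | ⟨y, hch, hadj, haC, hbC⟩)
    · exact ⟨del_adj_child hG hw hwv hch, w_mem_Cdir _, child_mem_Cdir hG hw hwv hch⟩
    · exact ⟨(del_adj_child hG hw hwv hch).symm, child_mem_Cdir hG hw hwv hch, w_mem_Cdir _⟩
    · have hTab := (gdel_adj.mp hadj).1
      have hwnC := w_not_mem_Cdir_child hG hw hwv hch
      refine ⟨?_, Cdir_child_sub hG hw hwv hch haC, Cdir_child_sub hG hw hwv hch hbC⟩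
      rw [gdel_adj]
      refine ⟨hTab, ?_⟩
      rw [Ne, Sym2.eq_iff]
      rintro (⟨h1, -⟩ | ⟨-, h2⟩)
      · exact hwnC (h1 ▸ haC)
      · exact hwnC (h2 ▸ hbC)

private lemma cdir_dist_eq (hG : GoodT G K v) {w x : V} (hw : w ∈ CvSet G K v) (hwv : w ≠ v)
    (hx : x ∈ Cdir G K v w) :
    (GdelG G K v w).dist w x = (GvG G K v).dist w x := by
  obtain ⟨p, hp, hl⟩ := Reachable.exists_path_of_dist hx
  have hT : ∀ e ∈ p.edges, e ∈ (GvG G K v).edgeSet :=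
    fun e he => (edgeSet_mono (deleteEdges_le _)) (p.edges_subset_edgeSet he)
  have hQ : (p.transfer _ hT).IsPath := hp.transfer hT
  have := path_length_eq_dist hG hw hQ
  rw [Walk.length_transfer] at this
  rw [← hl, this]

private lemma cdir_path_support (hG : GoodT G K v) {w x : V} (hw : w ∈ CvSet G K v)
    (hwv : w ≠ v) (hx : x ∈ Cdir G K v w) {q : (GvG G K v).Walk w x} (hq : q.IsPath) :
    ∀ z ∈ q.support, z ∈ Cdir G K v w := by
  obtain ⟨p0⟩ := hx
  have hp : p0.bypass.IsPath := Walk.bypass_isPath p0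
  set p := p0.bypass with hpdef
  have hT : ∀ e ∈ p.edges, e ∈ (GvG G K v).edgeSet :=
    fun e he => (edgeSet_mono (deleteEdges_le _)) (p.edges_subset_edgeSet he)
  have hQ : (p.transfer _ hT).IsPath := hp.transfer hT
  have heq := path_unique hG hw hq hQ
  intro z hz
  rw [heq, Walk.support_transfer] at hz
  exact mem_Cdir_of_support hz

private lemma child_dist_plus_one (hG : GoodT G K v) {w y x : V} (hw : w ∈ CvSet G K v)
    (hwv : w ≠ v) (hch : IsChild G K v w y) (hx : x ∈ Cdir G K v y) :
    (GvG G K v).dist w x = (GvG G K v).dist y x + 1 := by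
  have hy : y ∈ CvSet G K v := hch.1.2.2
  have hyv : y ≠ v := hch.2.2.1
  have hreach : (GvG G K v).Reachable y x := by
    obtain ⟨p⟩ := hx
    exact ⟨p.transfer _ (fun e he =>
      (edgeSet_mono (deleteEdges_le _)) (p.edges_subset_edgeSet he))⟩
  obtain ⟨q, hq, hl⟩ := hreach.exists_path_of_dist
  have hwq : w ∉ q.support := by
    intro hmem
    exact w_not_mem_Cdir_child hG hw hwv hch
      (cdir_path_support hG hy hyv hx hq w hmem)
  have hQ : (Walk.cons hch.1 q).IsPath := (Walk.cons_isPath_iff _ _).mpr ⟨hq, hwq⟩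
  have := path_length_eq_dist hG hw hQ
  rw [Walk.length_cons, hl] at this
  omega

private lemma hdir_eq_sSup {w : V} :
    hdir G K v w = sSup ((GdelG G K v w).dist w '' Cdir G K v w) := rfl

private lemma hdir_child_lt (hG : GoodT G K v) {w y : V} (hw : w ∈ CvSet G K v)
    (hwv : w ≠ v) (hch : IsChild G K v w y) : hdir G K v y + 1 ≤ hdir G K v w := by
  have hy : y ∈ CvSet G K v := hch.1.2.2
  have hyv : y ≠ v := hch.2.2.1
  have hfinw : ((GdelG G K v w).dist w '' Cdir G K v w).Finite :=
    ((hG.1.subset (Cdir_sub hw)).image _)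
  have hfiny : ((GdelG G K v y).dist y '' Cdir G K v y).Finite :=
    ((hG.1.subset (Cdir_sub hy)).image _)
  have hne : ((GdelG G K v y).dist y '' Cdir G K v y).Nonempty :=
    ⟨_, Set.mem_image_of_mem _ (w_mem_Cdir y)⟩
  have hmem := Set.Nonempty.csSup_mem hne hfiny
  rw [← hdir_eq_sSup] at hmem
  obtain ⟨xs, hxs, hxd⟩ := hmem
  have hxw : xs ∈ Cdir G K v w := Cdir_child_sub hG hw hwv hch hxs
  have hle : (GdelG G K v w).dist w xs ≤ hdir G K v w := by
    rw [hdir_eq_sSup]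
    exact le_csSup hfinw.bddAbove (Set.mem_image_of_mem _ hxw)
  have e1 : (GdelG G K v w).dist w xs = (GvG G K v).dist w xs := cdir_dist_eq hG hw hwv hxw
  have e2 : (GvG G K v).dist w xs = (GvG G K v).dist y xs + 1 :=
    child_dist_plus_one hG hw hwv hch hxs
  have e3 : (GdelG G K v y).dist y xs = (GvG G K v).dist y xs := cdir_dist_eq hG hy hyv hxs
  omega

end TreeLayer3

section TreeLayer4

open SimpleGraph

variable {V : Type*} {G : SimpleGraph V} [∀ x : V, Fintype (G.neighborSet x)] {K : Set V} {v : V}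

private lemma adj_mem_CvSet' {y : V} (h : G.Adj v y) : y ∈ CvSet G K v :=
  Set.mem_iUnion.mpr ⟨0, Set.mem_union_right _ h⟩

private lemma chF_iff (hG : GoodT G K v) {w : V} (hw : w ∈ CvSet G K v) (hwv : w ≠ v)
    (hwK : w ∉ K) {y : V} :
    y ∈ (G.neighborFinset w).erase (parentOf G K v w) ↔ IsChild G K v w y := by
  rw [Finset.mem_erase, mem_neighborFinset]
  constructor
  · rintro ⟨hne, hadj⟩
    have hyS : y ∈ CvSet G K v := adj_mem_CvSet hw hwK hadj
    have hTadj : (GvG G K v).Adj w y := ⟨hadj, hw, hyS⟩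
    rcases adj_classify' hG hw hwv hTadj with h1 | h1
    · exact absurd h1 hne
    · exact h1
  · intro h
    exact ⟨child_ne_parent hG hw hwv h, h.1.1⟩

private lemma parent_stage (hG : GoodT G K v) :
    ∀ t : ℕ, ∀ y ∈ CvStage G K v t, y ≠ v →
      ((parentOf G K v y = v ∨ parentOf G K v y ∉ K) ∧
        ∃ t' ≤ t, parentOf G K v y ∈ CvStage G K v t') := by
  have hv0 : v ∈ CvStage G K v 0 := Set.mem_union_left _ rfl
  have base : ∀ y : V, G.Adj v y → y ≠ v → parentOf G K v y = v := by
    intro y hadj hyv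
    have hyS : y ∈ CvSet G K v := adj_mem_CvSet' hadj
    have hTadj : (GvG G K v).Adj y v := ⟨hadj.symm, hyS, v_mem_CvSet⟩
    refine parent_unique hG hyS (parent_spec hG hyS hyv) ⟨hTadj, ?_⟩
    rw [SimpleGraph.dist_self, dist_eq_one_iff_adj.mpr hTadj]
  intro t
  induction t with
  | zero =>
    intro y hy hyv
    have hadj : G.Adj v y := by
      rcases hy with hy | hy
      · exact absurd hy hyv
      · exact hy
    rw [base y hadj hyv]
    exact ⟨Or.inl rfl, 0, le_refl 0, hv0⟩
  | succ t ih =>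
    intro y hy hyv
    rcases hy with hy | hy
    · obtain ⟨h1, t', ht', h2⟩ := ih y hy hyv
      exact ⟨h1, t', le_trans ht' (Nat.le_succ t), h2⟩
    · rw [Set.mem_iUnion₂] at hy
      obtain ⟨w, hw, hadj⟩ := hy
      have hadj : G.Adj w y := hadj
      have hwS : w ∈ CvSet G K v := Set.mem_iUnion.mpr ⟨t, hw.1⟩
      have hyS : y ∈ CvSet G K v := adj_mem_CvSet hwS hw.2 hadj
      by_cases hwv : w = v
      · subst hwv
        rw [base y hadj hyv]
        exact ⟨Or.inl rfl, 0, Nat.zero_le _, hv0⟩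
      · have hTadj : (GvG G K v).Adj w y := ⟨hadj, hwS, hyS⟩
        rcases adj_classify' hG hwS hwv hTadj with hcase | hcase
        · obtain ⟨-, t', ht', hws⟩ := ih w hw.1 hwv
          rw [← hcase] at hws
          obtain ⟨h1, t'', ht'', h2⟩ := ih y (stage_mono ht' hws) hyv
          exact ⟨h1, t'', le_trans ht'' (Nat.le_succ t), h2⟩
        · rw [hcase.2.2.2]
          exact ⟨Or.inr hw.2, t, Nat.le_succ t, hw.1⟩

private lemma parent_not_core (hG : GoodT G K v) {y : V} (hy : y ∈ CvSet G K v) (hyv : y ≠ v) :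
    parentOf G K v y = v ∨ parentOf G K v y ∉ K := by
  obtain ⟨t, ht⟩ := Set.mem_iUnion.mp hy
  exact (parent_stage hG t y ht hyv).1

private lemma core_no_child (hG : GoodT G K v) {u y : V} (hu : u ∈ CvSet G K v) (huv : u ≠ v)
    (huK : u ∈ K) (h : (GvG G K v).Adj u y) : y = parentOf G K v u := by
  rcases adj_classify' hG hu huv h with h1 | h1
  · exact h1
  · exfalso
    rcases parent_not_core hG h.2.2 h1.2.2.1 with hc | hc
    · rw [h1.2.2.2] at hc
      exact huv hc
    · rw [h1.2.2.2] at hc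
      exact hc huK

private lemma core_hdir_zero (hG : GoodT G K v) {u : V} (hu : u ∈ CvSet G K v) (huv : u ≠ v)
    (huK : u ∈ K) : hdir G K v u = 0 := by
  have hreach : ∀ x, (GdelG G K v u).Reachable u x → x = u := by
    intro x hr
    obtain ⟨p⟩ := hr
    cases p with
    | nil => rfl
    | cons h p' =>
      exfalso
      rw [gdel_adj] at h
      exact h.2 (by rw [core_no_child hG hu huv huK h.1])
  have hset : {x | (GdelG G K v u).Reachable u x} = {u} := by
    apply Set.eq_singleton_iff_unique_mem.mpr
    exact ⟨Reachable.refl u, hreach⟩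
  show hgt (GdelG G K v u) u = 0
  unfold hgt
  rw [hset, Set.image_singleton, dist_self]
  exact csSup_singleton 0

end TreeLayer4

section Freeze

open SimpleGraph

variable {V : Type*} {G : SimpleGraph V} [∀ x : V, Fintype (G.neighborSet x)]
  {σ : V → ℤ} {dp dm : ℝ}

private lemma sign_eq_of_mul_one {a b : ℤ} (ha : a = 1 ∨ a = -1) (hb : b = 1 ∨ b = -1)
    (h : a * b = 1) : b = a := by rcases ha with rfl | rfl <;> rcases hb with rfl | rfl <;> omega

private lemma sign_eq_of_mul_ne_one {a b : ℤ} (ha : a = 1 ∨ a = -1) (hb : b = 1 ∨ b = -1)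
    (h : ¬(a * b = 1)) : b = -a := by
  rcases ha with rfl | rfl <;> rcases hb with rfl | rfl <;> omega

private lemma mul_ne_one_iff {a b : ℤ} (ha : a = 1 ∨ a = -1) (hb : b = 1 ∨ b = -1)
    (h : ¬(a * b = 1)) : a * b = -1 := by
  rcases ha with rfl | rfl <;> rcases hb with rfl | rfl <;> omega

private lemma wpMsg_abs_le (hσ : ∀ x, σ x = 1 ∨ σ x = -1) (t : ℕ) (x y : V) :
    |wpMsg G Set.univ σ t x y| ≤ 1 := by
  cases t with
  | zero =>
    rcases hσ x with h | h <;> simp [wpMsg, h]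
  | succ t =>
    have : wpMsg G Set.univ σ (t + 1) x y
        = psiZ (∑ u ∈ (G.neighborFinset x).erase y, wpMsg G Set.univ σ t u x) := by
      simp only [wpMsg]
    rw [this]
    exact psiZ_abs_le _

private lemma core_bounds {x : V} (hx : x ∈ coreSet G σ dp dm 1) :
    |(({w | G.Adj x w ∧ σ x * σ w = 1}.ncard : ℝ)) - dp| ≤ 1 / 4 * Real.sqrt (dp * Real.log dp) ∧
    |(({w | G.Adj x w ∧ σ x * σ w = -1}.ncard : ℝ)) - dm| ≤ 1 / 4 * Real.sqrt (dp * Real.log dp) ∧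
    ({w | G.Adj x w} \ coreSet G σ dp dm 1).ncard ≤ 100 := by
  obtain ⟨U, hU, hxU⟩ := hx
  obtain ⟨h1, h2, h3⟩ := hU x hxU
  refine ⟨h1, h2, le_trans (le_trans (Set.ncard_le_ncard ?_ ?_) (le_refl _)) h3⟩
  · intro z hz
    exact ⟨hz.1, fun hc => hz.2 ⟨U, hU, hc⟩⟩
  · exact Set.Finite.diff (Set.toFinite (G.neighborSet x))

private lemma sqrt_big (hD : (1000000 : ℝ) ≤ dp) :
    (404 : ℝ) ≤ Real.sqrt (dp * Real.log dp) := by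
  have h1 : (1 : ℝ) ≤ Real.log dp := by
    rw [Real.le_log_iff_exp_le (by linarith)]
    have := Real.exp_one_lt_d9
    linarith
  have h2 : (163216 : ℝ) ≤ dp * Real.log dp := by nlinarith
  have h3 : (404 : ℝ) = Real.sqrt (404 ^ 2) := by
    rw [Real.sqrt_sq (by norm_num)]
  rw [h3]
  exact Real.sqrt_le_sqrt (by nlinarith)

private lemma core_frozen (hσ : ∀ x, σ x = 1 ∨ σ x = -1) (hdd : dm < dp)
    (hD : (1000000 : ℝ) ≤ dp) (hgap : 1 * Real.sqrt (dp * Real.log dp) ≤ dp - dm) :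
    ∀ (t : ℕ) (x y : V), x ∈ coreSet G σ dp dm 1 → wpMsg G Set.univ σ t x y = σ x := by
  intro t
  induction t with
  | zero => intro x y hx; simp [wpMsg]
  | succ t ih =>
    intro x y hx
    obtain ⟨hb1, hb2, hb3⟩ := core_bounds (σ := σ) hx
    classical
    set r := Real.sqrt (dp * Real.log dp) with hr
    set E := (G.neighborFinset x).erase y with hE
    set F := E.filter (fun w => w ∈ coreSet G σ dp dm 1) with hF
    set O := E.filter (fun w => ¬(w ∈ coreSet G σ dp dm 1)) with hO
    set P := F.filter (fun w => σ x * σ w = 1) with hPd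
    set M := F.filter (fun w => ¬(σ x * σ w = 1)) with hMd
    have hs1 : ∑ u ∈ E, wpMsg G Set.univ σ t u x
        = (∑ u ∈ F, wpMsg G Set.univ σ t u x) + ∑ u ∈ O, wpMsg G Set.univ σ t u x :=
      (Finset.sum_filter_add_sum_filter_not E _ _).symm
    have hs2 : ∑ u ∈ F, wpMsg G Set.univ σ t u x
        = (P.card : ℤ) * σ x + (M.card : ℤ) * (-σ x) := by
      rw [← Finset.sum_filter_add_sum_filter_not F (fun w => σ x * σ w = 1)]
      congr 1
      · calc ∑ u ∈ P, wpMsg G Set.univ σ t u x = ∑ u ∈ P, σ x := by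
              refine Finset.sum_congr rfl (fun w hw => ?_)
              rw [hPd, Finset.mem_filter] at hw
              have hwK := (Finset.mem_filter.mp hw.1).2
              rw [ih w x hwK]
              exact sign_eq_of_mul_one (hσ x) (hσ w) hw.2
          _ = (P.card : ℤ) * σ x := by rw [Finset.sum_const, nsmul_eq_mul]
      · calc ∑ u ∈ M, wpMsg G Set.univ σ t u x = ∑ u ∈ M, -σ x := by
              refine Finset.sum_congr rfl (fun w hw => ?_)
              rw [hMd, Finset.mem_filter] at hw
              have hwK := (Finset.mem_filter.mp hw.1).2
              rw [ih w x hwK]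
              exact sign_eq_of_mul_ne_one (hσ x) (hσ w) hw.2
          _ = (M.card : ℤ) * (-σ x) := by rw [Finset.sum_const, nsmul_eq_mul]
    have hOb : |∑ u ∈ O, wpMsg G Set.univ σ t u x| ≤ (O.card : ℤ) := by
      calc |∑ u ∈ O, wpMsg G Set.univ σ t u x| ≤ ∑ u ∈ O, |wpMsg G Set.univ σ t u x| :=
            Finset.abs_sum_le_sum_abs _ _
        _ ≤ ∑ u ∈ O, 1 := Finset.sum_le_sum (fun u _ => wpMsg_abs_le hσ t u x)
        _ = (O.card : ℤ) := by rw [Finset.sum_const, nsmul_eq_mul, mul_one]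
    -- cardinality bounds
    set Pall := (G.neighborFinset x).filter (fun w => σ x * σ w = 1) with hPall
    set Mall := (G.neighborFinset x).filter (fun w => σ x * σ w = -1) with hMall
    set Oall := (G.neighborFinset x).filter (fun w => ¬(w ∈ coreSet G σ dp dm 1)) with hOall
    have hPallset : {w | G.Adj x w ∧ σ x * σ w = 1} = (Pall : Set V) := by
      ext w; simp [hPall]
    have hMallset : {w | G.Adj x w ∧ σ x * σ w = -1} = (Mall : Set V) := by
      ext w; simp [hMall]
    have hOallset : {w | G.Adj x w} \ coreSet G σ dp dm 1 = (Oall : Set V) := by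
      ext w; simp [hOall]
    rw [hPallset, Set.ncard_coe_finset] at hb1
    rw [hMallset, Set.ncard_coe_finset] at hb2
    rw [hOallset, Set.ncard_coe_finset] at hb3
    have hOsub : O ⊆ Oall := by
      intro w hw
      rw [hO, Finset.mem_filter] at hw
      rw [hOall, Finset.mem_filter]
      exact ⟨Finset.mem_of_mem_erase hw.1, hw.2⟩
    have hMsub : M ⊆ Mall := by
      intro w hw
      rw [hMd, Finset.mem_filter] at hw
      rw [hMall, Finset.mem_filter]
      refine ⟨Finset.mem_of_mem_erase (Finset.mem_of_mem_filter _ hw.1), ?_⟩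
      exact mul_ne_one_iff (hσ x) (hσ w) hw.2
    have hPsub : Pall ⊆ (P ∪ O) ∪ {y} := by
      intro w hw
      rw [hPall, Finset.mem_filter] at hw
      by_cases hwy : w = y
      · exact Finset.mem_union_right _ (by simp [hwy])
      · have hwE : w ∈ E := Finset.mem_erase.mpr ⟨hwy, hw.1⟩
        by_cases hwK : w ∈ coreSet G σ dp dm 1
        · refine Finset.mem_union_left _ (Finset.mem_union_left _ ?_)
          rw [hPd, Finset.mem_filter, hF, Finset.mem_filter]
          exact ⟨⟨hwE, hwK⟩, hw.2⟩
        · refine Finset.mem_union_left _ (Finset.mem_union_right _ ?_)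
          rw [hO, Finset.mem_filter]
          exact ⟨hwE, hwK⟩
    have hPcard : Pall.card ≤ P.card + O.card + 1 := by
      have h1 := Finset.card_le_card hPsub
      have h2 := Finset.card_union_le (P ∪ O) ({y} : Finset V)
      have h3 := Finset.card_union_le P O
      have h4 : ({y} : Finset V).card = 1 := Finset.card_singleton y
      omega
    have h404 : (404 : ℝ) ≤ r := sqrt_big hD
    have hb1' := abs_le.mp hb1
    have hb2' := abs_le.mp hb2
    have hcard : 1 ≤ (P.card : ℤ) - M.card - O.card := by
      have c1 : (Pall.card : ℝ) ≤ (P.card : ℝ) + O.card + 1 := by exact_mod_cast hPcard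
      have c2 : (M.card : ℝ) ≤ (Mall.card : ℝ) := by
        exact_mod_cast Finset.card_le_card hMsub
      have c3 : (O.card : ℝ) ≤ 100 := by
        have := le_trans (Finset.card_le_card hOsub) hb3
        exact_mod_cast this
      have : (1 : ℝ) ≤ (P.card : ℝ) - M.card - O.card := by linarith
      exact_mod_cast this
    have habs := abs_le.mp hOb
    have hkey : 1 ≤ σ x * ∑ u ∈ E, wpMsg G Set.univ σ t u x := by
      rw [hs1, hs2]
      rcases hσ x with h | h <;> rw [h] <;> push_cast <;> nlinarith [habs.1, habs.2, hcard]
    have hunf : wpMsg G Set.univ σ (t + 1) x y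
        = psiZ (∑ u ∈ (G.neighborFinset x).erase y, wpMsg G Set.univ σ t u x) := by
      simp only [wpMsg]
    rw [hunf]
    rcases hσ x with h | h
    · rw [h]
      rw [h] at hkey
      exact psiZ_eq_one (by linarith)
    · rw [h]
      rw [h] at hkey
      exact psiZ_eq_neg_one (by linarith)

end Freeze

section CutDP

open SimpleGraph

variable {V : Type*} {G : SimpleGraph V} [∀ x : V, Fintype (G.neighborSet x)]
  {K : Set V} {v : V} {σ : V → ℤ}

/-- The bichromatic adjacent (ordered) pairs, as a finset. -/
private noncomputable def pairF (c : Finset V) (H : SimpleGraph V) (τ : V → ℤ) :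
    Finset (V × V) :=
  (c ×ˢ c).filter (fun p => H.Adj p.1 p.2 ∧ τ p.1 ≠ τ p.2)

private lemma mem_pairF {c : Finset V} {H : SimpleGraph V} {τ : V → ℤ} {p : V × V} :
    p ∈ pairF c H τ ↔ (p.1 ∈ c ∧ p.2 ∈ c) ∧ H.Adj p.1 p.2 ∧ τ p.1 ≠ τ p.2 := by
  rw [pairF, Finset.mem_filter, Finset.mem_product]

private lemma pairs_eq_coe (hG : GoodT G K v) {w : V} (hw : w ∈ CvSet G K v) (τ : V → ℤ) :
    {p : V × V | (Gdir G K v w).Adj p.1 p.2 ∧ τ p.1 ≠ τ p.2} =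
      ↑(pairF hG.1.toFinset (Gdir G K v w) τ) := by
  ext p
  rw [Set.mem_setOf_eq, Finset.mem_coe, mem_pairF]
  constructor
  · intro h
    obtain ⟨-, h1, h2⟩ := h.1
    exact ⟨⟨hG.1.mem_toFinset.mpr (Cdir_sub hw h1), hG.1.mem_toFinset.mpr (Cdir_sub hw h2)⟩, h⟩
  · exact fun h => h.2

private lemma ncard_pairs (hG : GoodT G K v) {w : V} (hw : w ∈ CvSet G K v) (τ : V → ℤ) :
    {p : V × V | (Gdir G K v w).Adj p.1 p.2 ∧ τ p.1 ≠ τ p.2}.ncard =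
      (pairF hG.1.toFinset (Gdir G K v w) τ).card := by
  rw [pairs_eq_coe hG hw τ, Set.ncard_coe_finset]

private lemma pairs_finite (hG : GoodT G K v) {w : V} (hw : w ∈ CvSet G K v) (τ : V → ℤ) :
    {p : V × V | (Gdir G K v w).Adj p.1 p.2 ∧ τ p.1 ≠ τ p.2}.Finite := by
  rw [pairs_eq_coe hG hw τ]
  exact (pairF hG.1.toFinset (Gdir G K v w) τ).finite_toSet

/-- The children of `w` (for `w ∉ K` a genuine set of children). -/
private noncomputable def chFn (G : SimpleGraph V) [∀ x : V, Fintype (G.neighborSet x)]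
    (K : Set V) (v w : V) : Finset V :=
  (G.neighborFinset w).erase (parentOf G K v w)

private lemma card_pairs_decomp (hG : GoodT G K v) {w : V} (hw : w ∈ CvSet G K v)
    (hwv : w ≠ v) (hwK : w ∉ K) (τ : V → ℤ) :
    (pairF hG.1.toFinset (Gdir G K v w) τ).card =
      2 * ((chFn G K v w).filter (fun y => τ y ≠ τ w)).card +
        ∑ y ∈ chFn G K v w, (pairF hG.1.toFinset (Gdir G K v y) τ).card := by
  classical
  set c := hG.1.toFinset with hc
  have hchild : ∀ {y}, y ∈ chFn G K v w ↔ IsChild G K v w y := fun {y} =>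
    chF_iff hG hw hwv hwK
  set rootF := ((chFn G K v w).filter (fun y => τ y ≠ τ w)).biUnion
      (fun y => {(w, y), (y, w)}) with hrootF
  have hwc : w ∈ c := hG.1.mem_toFinset.mpr hw
  have hmemc : ∀ {y}, IsChild G K v w y → y ∈ c := fun hy =>
    hG.1.mem_toFinset.mpr hy.1.2.2
  -- the partition
  have hsplit : pairF c (Gdir G K v w) τ =
      rootF ∪ (chFn G K v w).biUnion (fun y => pairF c (Gdir G K v y) τ) := by
    ext ⟨a, b⟩
    rw [mem_pairF, Finset.mem_union]
    constructor
    · rintro ⟨⟨hac, hbc⟩, hadj, hne⟩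
      rcases (gdir_adj_decomp hG hw hwv).mp hadj with ⟨rfl, hch⟩ | ⟨rfl, hch⟩ | ⟨y, hch, hadj'⟩
      · left
        rw [hrootF, Finset.mem_biUnion]
        exact ⟨b, Finset.mem_filter.mpr ⟨hchild.mpr hch, fun hc' => hne hc'.symm⟩, by simp⟩
      · left
        rw [hrootF, Finset.mem_biUnion]
        exact ⟨a, Finset.mem_filter.mpr ⟨hchild.mpr hch, hne⟩, by simp⟩
      · right
        rw [Finset.mem_biUnion]
        exact ⟨y, hchild.mpr hch, mem_pairF.mpr ⟨⟨hac, hbc⟩, hadj', hne⟩⟩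
    · rintro (hmem | hmem)
      case _ =>
        rw [hrootF, Finset.mem_biUnion] at hmem
        obtain ⟨y, hy, hmem⟩ := hmem
        rw [Finset.mem_filter] at hy
        have hch := hchild.mp hy.1
        simp only [Finset.mem_insert, Finset.mem_singleton, Prod.mk.injEq] at hmem
        rcases hmem with ⟨rfl, rfl⟩ | ⟨rfl, rfl⟩
        · exact ⟨⟨hwc, hmemc hch⟩,
            (gdir_adj_decomp hG hw hwv).mpr (Or.inl ⟨rfl, hch⟩), fun hc' => hy.2 hc'.symm⟩
        · exact ⟨⟨hmemc hch, hwc⟩,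
            (gdir_adj_decomp hG hw hwv).mpr (Or.inr (Or.inl ⟨rfl, hch⟩)), hy.2⟩
      case _ =>
        rw [Finset.mem_biUnion] at hmem
        obtain ⟨y, hy, hmem⟩ := hmem
        rw [mem_pairF] at hmem
        exact ⟨hmem.1, (gdir_adj_decomp hG hw hwv).mpr
          (Or.inr (Or.inr ⟨y, hchild.mp hy, hmem.2.1⟩)), hmem.2.2⟩
  -- disjointness of the two parts
  have hcoord : ∀ {y : V}, IsChild G K v w y → ∀ {p : V × V},
      p ∈ pairF c (Gdir G K v y) τ → p.1 ∈ Cdir G K v y ∧ p.2 ∈ Cdir G K v y := by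
    intro y hy p hp
    obtain ⟨-, hadj, -⟩ := mem_pairF.mp hp
    exact ⟨hadj.2.1, hadj.2.2⟩
  have hdisj : Disjoint rootF ((chFn G K v w).biUnion (fun y => pairF c (Gdir G K v y) τ)) := by
    rw [Finset.disjoint_left]
    intro p hp hp'
    rw [hrootF, Finset.mem_biUnion] at hp
    obtain ⟨y, -, hmem⟩ := hp
    rw [Finset.mem_biUnion] at hp'
    obtain ⟨y', hy', hmem'⟩ := hp'
    have hcc := hcoord (hchild.mp hy') hmem'
    have hwn := w_not_mem_Cdir_child hG hw hwv (hchild.mp hy')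
    simp only [Finset.mem_insert, Finset.mem_singleton, Prod.mk.injEq] at hmem
    rcases hmem with ⟨rfl, -⟩ | ⟨-, rfl⟩
    · exact hwn (by simpa using hcc.1)
    · exact hwn (by simpa using hcc.2)
  rw [hsplit, Finset.card_union_of_disjoint hdisj]
  congr 1
  · -- card of rootF
    rw [hrootF, Finset.card_biUnion]
    · rw [Finset.sum_congr rfl (fun y hy => ?_), Finset.sum_const, smul_eq_mul, Nat.mul_comm]
      have hch := hchild.mp (Finset.mem_filter.mp hy).1
      rw [Finset.card_insert_of_notMem, Finset.card_singleton]
      rw [Finset.mem_singleton]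
      intro hc'
      have := congrArg Prod.fst hc'
      exact hch.1.ne (by simpa using this)
    · intro y1 h1 y2 h2 hne12
      rw [Function.onFun, Finset.disjoint_left]
      rintro ⟨pa, pb⟩ hp1 hp2
      have hc1 := hchild.mp (Finset.mem_filter.mp h1).1
      have hc2 := hchild.mp (Finset.mem_filter.mp h2).1
      simp only [Finset.mem_insert, Finset.mem_singleton, Prod.mk.injEq] at hp1 hp2
      rcases hp1 with ⟨rfl, rfl⟩ | ⟨rfl, rfl⟩ <;> rcases hp2 with ⟨h21, h22⟩ | ⟨h21, h22⟩
      · exact hne12 h22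
      · exact hc2.1.ne h21
      · exact hc1.1.ne' h21
      · exact hne12 h21
  · -- card of the child part
    rw [Finset.card_biUnion]
    intro y1 h1 y2 h2 hne12
    rw [Function.onFun, Finset.disjoint_left]
    intro p hp1 hp2
    exact Cdir_disjoint hG hw hwv (hchild.mp h1) (hchild.mp h2) hne12
      (hcoord (hchild.mp h1) hp1).1 (hcoord (hchild.mp h2) hp2).1

end CutDP

section CutDP2

open SimpleGraph

variable {V : Type*} {G : SimpleGraph V} [∀ x : V, Fintype (G.neighborSet x)]
  {K : Set V} {v : V} {σ : V → ℤ}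

private lemma cutW_le' (G' : SimpleGraph V) (U : Set V) (σ' τ : V → ℤ)
    (h1 : ∀ x, τ x = 1 ∨ τ x = -1) (h2 : ∀ x ∈ U, τ x = σ' x) (k : ℕ)
    (hk : 2 * k = {p : V × V | G'.Adj p.1 p.2 ∧ τ p.1 ≠ τ p.2}.ncard) :
    cutW G' U σ' ≤ k := Nat.sInf_le ⟨τ, h1, h2, hk⟩

private lemma pairs_even (G' : SimpleGraph V) (τ : V → ℤ)
    (hfin : {p : V × V | G'.Adj p.1 p.2 ∧ τ p.1 ≠ τ p.2}.Finite) :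
    ∃ k, 2 * k = {p : V × V | G'.Adj p.1 p.2 ∧ τ p.1 ≠ τ p.2}.ncard := by
  obtain ⟨k, hk⟩ := even_ncard_sym _ hfin
    (fun p hp => ⟨hp.1.symm, fun h => hp.2 h.symm⟩) (fun p hp => hp.1.ne)
  exact ⟨k, by omega⟩

private lemma cutW_spec (G' : SimpleGraph V) (U : Set V) (σ' : V → ℤ)
    (hσ' : ∀ x, σ' x = 1 ∨ σ' x = -1)
    (hfin : ∀ τ : V → ℤ, {p : V × V | G'.Adj p.1 p.2 ∧ τ p.1 ≠ τ p.2}.Finite) :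
    ∃ τ : V → ℤ, (∀ x, τ x = 1 ∨ τ x = -1) ∧ (∀ x ∈ U, τ x = σ' x) ∧
      2 * cutW G' U σ' = {p : V × V | G'.Adj p.1 p.2 ∧ τ p.1 ≠ τ p.2}.ncard := by
  have hne : {k : ℕ | ∃ τ : V → ℤ, (∀ x, τ x = 1 ∨ τ x = -1) ∧ (∀ x ∈ U, τ x = σ' x) ∧
      2 * k = {p : V × V | G'.Adj p.1 p.2 ∧ τ p.1 ≠ τ p.2}.ncard}.Nonempty := by
    obtain ⟨k, hk⟩ := pairs_even G' σ' (hfin σ')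
    exact ⟨k, σ', hσ', fun x _ => rfl, hk⟩
  exact Nat.sInf_mem hne

/-- `N_{w→v}(a)`: the optimal cut of the subtree hanging from `w`, with `w` coloured `a`. -/
private noncomputable def Ncut (G : SimpleGraph V) (K : Set V) (σ : V → ℤ) (v w : V)
    (a : ℤ) : ℕ :=
  cutW (Gdir G K v w) (Cdir G K v w ∩ ({w} ∪ K)) (fun x => if x = w then a else σ x)

private lemma Ncut_spec (hG : GoodT G K v) (hσ : ∀ x, σ x = 1 ∨ σ x = -1) {w : V}
    (hw : w ∈ CvSet G K v) {a : ℤ} (ha : a = 1 ∨ a = -1) :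
    ∃ τ : V → ℤ, (∀ x, τ x = 1 ∨ τ x = -1) ∧
      (∀ x ∈ Cdir G K v w ∩ ({w} ∪ K), τ x = if x = w then a else σ x) ∧
      2 * Ncut G K σ v w a = (pairF hG.1.toFinset (Gdir G K v w) τ).card := by
  obtain ⟨τ, h1, h2, h3⟩ := cutW_spec (Gdir G K v w) (Cdir G K v w ∩ ({w} ∪ K))
    (fun x => if x = w then a else σ x)
    (fun x => by
      by_cases h : x = w
      · simp only [h, if_pos rfl]; exact ha
      · simp only [if_neg h]; exact hσ x)
    (fun τ => pairs_finite hG hw τ)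
  refine ⟨τ, h1, h2, ?_⟩
  unfold Ncut
  rw [h3, ncard_pairs hG hw]

private lemma Ncut_le (hG : GoodT G K v) {w : V} (hw : w ∈ CvSet G K v) {a : ℤ}
    (τ : V → ℤ) (h1 : ∀ x, τ x = 1 ∨ τ x = -1)
    (h2 : ∀ x ∈ Cdir G K v w ∩ ({w} ∪ K), τ x = if x = w then a else σ x) (k : ℕ)
    (hk : 2 * k = (pairF hG.1.toFinset (Gdir G K v w) τ).card) :
    Ncut G K σ v w a ≤ k := by
  unfold Ncut
  refine cutW_le' _ _ _ τ h1 h2 k ?_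
  rw [ncard_pairs hG hw, hk]

/-- contribution of the child `y` when its parent gets colour `a`. -/
private noncomputable def mch (G : SimpleGraph V) (K : Set V) (σ : V → ℤ) (v y : V)
    (a : ℤ) : ℕ :=
  if y ∈ K then Ncut G K σ v y (σ y) + (if a = σ y then 0 else 1)
  else min (Ncut G K σ v y a) (Ncut G K σ v y (-a) + 1)

private lemma pm_cases {a b : ℤ} (ha : a = 1 ∨ a = -1) (hb : b = 1 ∨ b = -1) :
    b = a ∨ b = -a := by omega

private lemma Ncut_decomp (hG : GoodT G K v) (hσ : ∀ x, σ x = 1 ∨ σ x = -1) {w : V}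
    (hw : w ∈ CvSet G K v) (hwv : w ≠ v) (hwK : w ∉ K) {a : ℤ} (ha : a = 1 ∨ a = -1) :
    Ncut G K σ v w a = ∑ y ∈ chFn G K v w, mch G K σ v y a := by
  classical
  set c := hG.1.toFinset with hc
  have hchild : ∀ {y}, y ∈ chFn G K v w ↔ IsChild G K v w y := fun {y} =>
    chF_iff hG hw hwv hwK
  have hyprops : ∀ y ∈ chFn G K v w, y ∈ CvSet G K v ∧ y ≠ v ∧ y ≠ w ∧ y ∈ Cdir G K v w := by
    intro y hy
    have hch := hchild.mp hy
    exact ⟨hch.1.2.2, hch.2.2.1, hch.1.ne', child_mem_Cdir hG hw hwv hch⟩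
  -- upper bound : Ncut ≤ ∑ mch
  have hub : Ncut G K σ v w a ≤ ∑ y ∈ chFn G K v w, mch G K σ v y a := by
    set bsel : V → ℤ := fun y => if y ∈ K then σ y
      else (if Ncut G K σ v y a ≤ Ncut G K σ v y (-a) + 1 then a else -a) with hbsel
    have hbpm : ∀ y, bsel y = 1 ∨ bsel y = -1 := by
      intro y
      rw [hbsel]
      by_cases h1 : y ∈ K
      · simp only [if_pos h1]; exact hσ y
      · simp only [if_neg h1]
        by_cases h2 : Ncut G K σ v y a ≤ Ncut G K σ v y (-a) + 1 <;> simp [h2] <;> omega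
    have hpick : ∀ y : V, ∃ τy : V → ℤ, y ∈ chFn G K v w →
        (∀ x, τy x = 1 ∨ τy x = -1) ∧
        (∀ x ∈ Cdir G K v y ∩ ({y} ∪ K), τy x = if x = y then bsel y else σ x) ∧
        2 * Ncut G K σ v y (bsel y) = (pairF c (Gdir G K v y) τy).card := by
      intro y
      by_cases hy : y ∈ chFn G K v w
      · obtain ⟨τy, k1, k2, k3⟩ := Ncut_spec hG hσ (hyprops y hy).1 (hbpm y)
        exact ⟨τy, fun _ => ⟨k1, k2, k3⟩⟩
      · exact ⟨fun _ => 1, fun h => absurd h hy⟩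
    choose τf hτf using hpick
    set τ : V → ℤ := fun x =>
      if h : ∃ y, y ∈ chFn G K v w ∧ x ∈ Cdir G K v y then τf h.choose x
      else (if x = w then a else σ x) with hτ
    have glue_eq : ∀ {y x}, y ∈ chFn G K v w → x ∈ Cdir G K v y → τ x = τf y x := by
      intro y x hy hx
      have hex : ∃ y', y' ∈ chFn G K v w ∧ x ∈ Cdir G K v y' := ⟨y, hy, hx⟩
      rw [hτ]
      simp only [dif_pos hex]
      have hspec := hex.choose_spec
      by_cases hyy : hex.choose = y
      · rw [hyy]
      · exact absurd hx (fun hx' => Cdir_disjoint hG hw hwv (hchild.mp hspec.1)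
          (hchild.mp hy) hyy hspec.2 hx')
    have hτw : τ w = a := by
      rw [hτ]
      have hnex : ¬∃ y, y ∈ chFn G K v w ∧ w ∈ Cdir G K v y := by
        rintro ⟨y, hy, hmem⟩
        exact w_not_mem_Cdir_child hG hw hwv (hchild.mp hy) hmem
      simp [dif_neg hnex]
    have hτpm : ∀ x, τ x = 1 ∨ τ x = -1 := by
      intro x
      rw [hτ]
      by_cases h : ∃ y, y ∈ chFn G K v w ∧ x ∈ Cdir G K v y
      · simp only [dif_pos h]
        exact ((hτf h.choose) h.choose_spec.1).1 x
      · simp only [dif_neg h]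
        by_cases hxw : x = w
        · simp only [if_pos hxw]; exact ha
        · simp only [if_neg hxw]; exact hσ x
    have hτy : ∀ y ∈ chFn G K v w, τ y = bsel y := by
      intro y hy
      rw [glue_eq hy (w_mem_Cdir y)]
      have := ((hτf y) hy).2.1 y ⟨w_mem_Cdir y, Or.inl rfl⟩
      rw [this, if_pos rfl]
    have hfeas : ∀ x ∈ Cdir G K v w ∩ ({w} ∪ K), τ x = if x = w then a else σ x := by
      rintro x ⟨hxC, hxWK⟩
      by_cases hxw : x = w
      · rw [if_pos hxw, hxw, hτw]
      · rw [if_neg hxw]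
        have hxK : x ∈ K := by
          rcases hxWK with h | h
          · exact absurd h hxw
          · exact h
        obtain ⟨y, hch, hxy⟩ := Cdir_decomp hG hw hwv hxC hxw
        have hy := hchild.mpr hch
        rw [glue_eq hy hxy]
        have := ((hτf y) hy).2.1 x ⟨hxy, Or.inr hxK⟩
        rw [this]
        by_cases hxyeq : x = y
        · rw [if_pos hxyeq, hxyeq]
          have hyK : y ∈ K := hxyeq ▸ hxK
          rw [hbsel]
          simp only [if_pos hyK]
        · rw [if_neg hxyeq]
    -- count for glued colouring
    have hpair_child : ∀ y ∈ chFn G K v w,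
        pairF c (Gdir G K v y) τ = pairF c (Gdir G K v y) (τf y) := by
      intro y hy
      ext p
      rw [mem_pairF, mem_pairF]
      constructor
      · rintro ⟨hm, hadj, hne⟩
        refine ⟨hm, hadj, ?_⟩
        rwa [← glue_eq hy hadj.2.1, ← glue_eq hy hadj.2.2]
      · rintro ⟨hm, hadj, hne⟩
        refine ⟨hm, hadj, ?_⟩
        rwa [glue_eq hy hadj.2.1, glue_eq hy hadj.2.2]
    have hcount := card_pairs_decomp hG hw hwv hwK τ
    have hcount2 : (pairF c (Gdir G K v w) τ).card =
        2 * ((chFn G K v w).filter (fun y => bsel y ≠ a)).card +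
          ∑ y ∈ chFn G K v w, 2 * Ncut G K σ v y (bsel y) := by
      rw [hcount]
      congr 1
      · congr 1
        apply Finset.card_bij (fun y _ => y) ?_ (fun a b _ _ h => h) ?_
        · intro y hy
          rw [Finset.mem_filter] at hy ⊢
          rw [hτy y hy.1, hτw] at hy
          exact ⟨hy.1, hy.2⟩
        · intro y hy
          rw [Finset.mem_filter] at hy
          refine ⟨y, ?_, rfl⟩
          rw [Finset.mem_filter, hτy y hy.1, hτw]
          exact ⟨hy.1, hy.2⟩
      · refine Finset.sum_congr rfl (fun y hy => ?_)
        rw [hpair_child y hy, ← ((hτf y) hy).2.2]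
    have hkk : 2 * (((chFn G K v w).filter (fun y => bsel y ≠ a)).card +
        ∑ y ∈ chFn G K v w, Ncut G K σ v y (bsel y)) = (pairF c (Gdir G K v w) τ).card := by
      rw [hcount2, ← Finset.mul_sum]
      ring
    have hNle := Ncut_le hG hw τ hτpm hfeas _ hkk
    refine le_trans hNle ?_
    rw [Finset.card_filter, ← Finset.sum_add_distrib]
    refine Finset.sum_le_sum (fun y hy => ?_)
    rw [mch]
    by_cases hyK : y ∈ K
    · rw [if_pos hyK]
      have hby : bsel y = σ y := by rw [hbsel]; simp only [if_pos hyK]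
      rw [hby]
      by_cases haσ : a = σ y
      · rw [if_pos haσ]
        have hns : ¬(σ y ≠ a) := fun h => h haσ.symm
        rw [if_neg hns]
        omega
      · rw [if_neg haσ]
        have hs : σ y ≠ a := fun h => haσ h.symm
        rw [if_pos hs]
        omega
    · rw [if_neg hyK]
      have hby : bsel y = if Ncut G K σ v y a ≤ Ncut G K σ v y (-a) + 1 then a else -a := by
        rw [hbsel]; simp only [if_neg hyK]
      by_cases hmin : Ncut G K σ v y a ≤ Ncut G K σ v y (-a) + 1
      · rw [hby, if_pos hmin]
        have hns : ¬(a ≠ a) := fun h => h rfl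
        rw [if_neg hns, min_eq_left hmin]
        omega
      · rw [hby, if_neg hmin]
        have hne : -a ≠ a := by omega
        rw [if_pos hne, min_eq_right (by omega : Ncut G K σ v y (-a) + 1 ≤ Ncut G K σ v y a)]
        omega
  -- lower bound : ∑ mch ≤ Ncut
  have hlb : ∑ y ∈ chFn G K v w, mch G K σ v y a ≤ Ncut G K σ v w a := by
    obtain ⟨τ, h1, h2, h3⟩ := Ncut_spec hG hσ hw ha
    have hτw : τ w = a := by
      have := h2 w ⟨w_mem_Cdir w, Or.inl rfl⟩
      rwa [if_pos rfl] at this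
    have hper : ∀ y ∈ chFn G K v w, ∃ ky,
        2 * ky = (pairF c (Gdir G K v y) τ).card ∧
        2 * mch G K σ v y a ≤ 2 * (if τ y ≠ τ w then 1 else 0) + 2 * ky := by
      intro y hy
      have hch := hchild.mp hy
      have hyS := (hyprops y hy).1
      have hynw : y ≠ w := (hyprops y hy).2.2.1
      have hyCd : y ∈ Cdir G K v w := (hyprops y hy).2.2.2
      obtain ⟨ky, hky⟩ := by
        have := pairs_even (Gdir G K v y) τ (pairs_finite hG hyS τ)
        rwa [ncard_pairs hG hyS] at this
      refine ⟨ky, hky, ?_⟩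
      -- τ is feasible for the child problem with boundary value τ y
      have hfeasy : ∀ x ∈ Cdir G K v y ∩ ({y} ∪ K), τ x = if x = y then τ y else σ x := by
        rintro x ⟨hxC, hxYK⟩
        by_cases hxy : x = y
        · rw [if_pos hxy, hxy]
        · rw [if_neg hxy]
          have hxK : x ∈ K := by
            rcases hxYK with h | h
            · exact absurd h hxy
            · exact h
          have hxw : x ≠ w := by
            intro hc
            subst hc
            exact w_not_mem_Cdir_child hG hw hwv hch hxC
          have := h2 x ⟨Cdir_child_sub hG hw hwv hch hxC, Or.inr hxK⟩
          rwa [if_neg hxw] at this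
      have hNy : Ncut G K σ v y (τ y) ≤ ky := Ncut_le hG hyS τ h1 hfeasy ky hky
      by_cases hyK : y ∈ K
      · have hτyσ : τ y = σ y := by
          have := h2 y ⟨hyCd, Or.inr hyK⟩
          rwa [if_neg hynw] at this
        rw [mch, if_pos hyK, ← hτyσ]
        rw [hτw]
        by_cases hay : a = τ y
        · rw [if_pos hay]
          have : ¬(τ y ≠ a) := fun h => h hay.symm
          rw [if_neg this]
          omega
        · rw [if_neg hay]
          have : τ y ≠ a := fun h => hay h.symm
          rw [if_pos this]
          omega
      · rw [mch, if_neg hyK, hτw]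
        rcases pm_cases ha (h1 y) with hcase | hcase
        · rw [hcase]
          have : ¬(a ≠ a) := fun h => h rfl
          rw [if_neg this]
          have : min (Ncut G K σ v y a) (Ncut G K σ v y (-a) + 1) ≤ Ncut G K σ v y a :=
            min_le_left _ _
          rw [hcase] at hNy
          omega
        · rw [hcase]
          have hne : -a ≠ a := by omega
          rw [if_pos hne]
          have : min (Ncut G K σ v y a) (Ncut G K σ v y (-a) + 1) ≤ Ncut G K σ v y (-a) + 1 :=
            min_le_right _ _
          rw [hcase] at hNy
          omega
    choose kf hkf1 hkf2 using hper
    have hcount := card_pairs_decomp hG hw hwv hwK τ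
    rw [← hc] at hcount
    have hsum : ∑ y ∈ chFn G K v w, (pairF c (Gdir G K v y) τ).card =
        2 * ∑ y ∈ (chFn G K v w).attach, kf y.1 y.2 := by
      rw [Finset.mul_sum, ← Finset.sum_attach (chFn G K v w)
        (fun y => (pairF c (Gdir G K v y) τ).card)]
      exact Finset.sum_congr rfl (fun y _ => (hkf1 y.1 y.2).symm)
    have hfilt : ((chFn G K v w).filter (fun y => τ y ≠ τ w)).card =
        ∑ y ∈ (chFn G K v w).attach, (if τ y.1 ≠ τ w then 1 else 0) := by
      rw [Finset.card_filter, ← Finset.sum_attach (chFn G K v w)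
        (fun y => if τ y ≠ τ w then (1 : ℕ) else 0)]
    have hmch : ∑ y ∈ chFn G K v w, mch G K σ v y a =
        ∑ y ∈ (chFn G K v w).attach, mch G K σ v y.1 a :=
      (Finset.sum_attach _ _).symm
    have hdbl : 2 * ∑ y ∈ chFn G K v w, mch G K σ v y a ≤ 2 * Ncut G K σ v w a := by
      rw [h3, hcount, hmch, Finset.mul_sum, hsum, hfilt, Finset.mul_sum, Finset.mul_sum]
      rw [← Finset.sum_add_distrib]
      refine Finset.sum_le_sum (fun y _ => ?_)
      exact hkf2 y.1 y.2
    omega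
  omega

end CutDP2

section Grand

open SimpleGraph

variable {V : Type*} {G : SimpleGraph V} [∀ x : V, Fintype (G.neighborSet x)]
  {K : Set V} {v : V} {σ : V → ℤ}

private noncomputable def SigW (G : SimpleGraph V) [∀ x : V, Fintype (G.neighborSet x)]
    (K : Set V) (σ : V → ℤ) (v w : V) : ℤ :=
  ∑ y ∈ chFn G K v w, muStarDir G K σ v y

private lemma psiZ_inv_one {x : ℤ} (h : psiZ x = 1) : 1 ≤ x := by unfold psiZ at h; omega

private lemma psiZ_inv_neg {x : ℤ} (h : psiZ x = -1) : x ≤ -1 := by unfold psiZ at h; omega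

private lemma muStar_core (hcore : ∀ (t : ℕ) (x y : V), x ∈ K → wpMsg G Set.univ σ t x y = σ x)
    {y : V} (hyK : y ∈ K) : muStarDir G K σ v y = σ y := by
  unfold muStarDir
  exact hcore _ y _ hyK

private lemma grand (hG : GoodT G K v) (hσ : ∀ x, σ x = 1 ∨ σ x = -1)
    (hcore : ∀ (t : ℕ) (x y : V), x ∈ K → wpMsg G Set.univ σ t x y = σ x) :
    ∀ n : ℕ, ∀ w : V, w ∈ CvSet G K v → w ≠ v → w ∉ K → hdir G K v w = n →
      (((Ncut G K σ v w (-1) : ℤ) - Ncut G K σ v w 1 = SigW G K σ v w) ∧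
        ∀ t, hdir G K v w + 1 ≤ t →
          wpMsg G Set.univ σ t w (parentOf G K v w) = psiZ (SigW G K σ v w)) := by
  intro n
  induction n using Nat.strong_induction_on with
  | _ n ih =>
    intro w hw hwv hwK hn
    have hchild : ∀ {y}, y ∈ chFn G K v w ↔ IsChild G K v w y := fun {y} =>
      chF_iff hG hw hwv hwK
    have hkey : ∀ y ∈ chFn G K v w,
        ((mch G K σ v y (-1) : ℤ) - mch G K σ v y 1 = muStarDir G K σ v y) ∧
        (∀ t, hdir G K v w ≤ t → wpMsg G Set.univ σ t y w = muStarDir G K σ v y) := by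
      intro y hy
      have hch := hchild.mp hy
      have hyS : y ∈ CvSet G K v := hch.1.2.2
      have hyv : y ≠ v := hch.2.2.1
      by_cases hyK : y ∈ K
      · constructor
        · rw [muStar_core hcore hyK, mch, mch, if_pos hyK, if_pos hyK]
          rcases hσ y with h | h <;> rw [h] <;> norm_num
        · intro t ht
          rw [muStar_core hcore hyK]
          exact hcore t y w hyK
      · have hlt : hdir G K v y + 1 ≤ hdir G K v w := hdir_child_lt hG hw hwv hch
        obtain ⟨ihd, ihs⟩ := ih (hdir G K v y) (by omega) y hyS hyv hyK rfl
        have hmu : muStarDir G K σ v y = psiZ (SigW G K σ v y) := by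
          unfold muStarDir
          exact ihs (hdir G K v y + 1) (le_refl _)
        constructor
        · rw [mch, mch, if_neg hyK, if_neg hyK]
          have e1 : (-(-1 : ℤ)) = 1 := by norm_num
          rw [e1]
          rw [hmu, ← ihd]
          exact min_sub_min _ _
        · intro t ht
          rw [hmu, ← hch.2.2.2]
          exact ihs t (by omega)
    constructor
    · rw [Ncut_decomp hG hσ hw hwv hwK (Or.inr rfl), Ncut_decomp hG hσ hw hwv hwK (Or.inl rfl)]
      rw [Nat.cast_sum, Nat.cast_sum, ← Finset.sum_sub_distrib]
      unfold SigW
      exact Finset.sum_congr rfl (fun y hy => (hkey y hy).1)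
    · intro t ht
      obtain ⟨t', rfl⟩ : ∃ t', t = t' + 1 := ⟨t - 1, by omega⟩
      have hunf : wpMsg G Set.univ σ (t' + 1) w (parentOf G K v w)
          = psiZ (∑ u ∈ (G.neighborFinset w).erase (parentOf G K v w),
              wpMsg G Set.univ σ t' u w) := by
        simp only [wpMsg]
      rw [hunf]
      congr 1
      unfold SigW
      exact Finset.sum_congr rfl (fun y hy => (hkey y hy).2 t' (by omega))

end Grand


/-- Equation (opt 1) in the proof of Lemma 3.3: for `u ∈ C_v \ {v}` with `h_{u→v} ≥ 1`
and `z = μ*_{u→v} ∈ {±1}`,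
`cut(G_{u→v}, σ^{-z}_{u→v}) - cut(G_{u→v}, σ^z_{u→v}) = |∑_{w∈∂u\{u_{↑v}}} μ*_{w→v}|`. -/
theorem cut_difference_formula :
    ∃ c : ℝ, 0 < c ∧ ∃ D : ℝ, ∀ dp dm : ℝ,
    0 < dm → dm < dp → D ≤ dp → c * Real.sqrt (dp * Real.log dp) ≤ dp - dm →
    ∀ (V : Type*) (G : SimpleGraph V) [∀ v : V, Fintype (G.neighborSet v)] (σ : V → ℤ),
    (∀ x : V, σ x = 1 ∨ σ x = -1) →
    ∀ K : Set V, K = coreSet G σ dp dm c →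
    ∀ v : V, (CvSet G K v).Finite → (G.induce (CvSet G K v)).IsTree →
    ∀ u ∈ CvSet G K v, u ≠ v → 1 ≤ hdir G K v u →
      ∀ z : ℤ, z = muStarDir G K σ v u → (z = 1 ∨ z = -1) →
        (cutW (Gdir G K v u) (Cdir G K v u ∩ ({u} ∪ K))
            (fun x => if x = u then -z else σ x) : ℤ)
          - (cutW (Gdir G K v u) (Cdir G K v u ∩ ({u} ∪ K))
            (fun x => if x = u then z else σ x) : ℤ)
          = |∑ w ∈ (G.neighborFinset u).erase (parentOf G K v u), muStarDir G K σ v w| := by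
  refine ⟨1, one_pos, 1000000, ?_⟩
  intro dp dm hdm hdd hD hgap V G _inst σ hσ K hK v hfin htree u hu huv hh z hzdef hz
  subst hK
  have hG : GoodT G (coreSet G σ dp dm 1) v := ⟨hfin, htree⟩
  have hcore := core_frozen (G := G) hσ hdd hD hgap
  have huK : u ∉ coreSet G σ dp dm 1 := by
    intro hc
    have := core_hdir_zero hG hu huv hc
    omega
  obtain ⟨hdiff, hstab⟩ := grand hG hσ hcore (hdir G (coreSet G σ dp dm 1) v u) u hu huv huK rfl
  have hz' : z = psiZ (SigW G (coreSet G σ dp dm 1) σ v u) := by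
    rw [hzdef]
    unfold muStarDir
    exact hstab (hdir G (coreSet G σ dp dm 1) v u + 1) (le_refl _)
  show (Ncut G (coreSet G σ dp dm 1) σ v u (-z) : ℤ)
      - (Ncut G (coreSet G σ dp dm 1) σ v u z : ℤ)
      = |SigW G (coreSet G σ dp dm 1) σ v u|
  rcases hz with rfl | rfl
  · have h1 := psiZ_inv_one hz'.symm
    rw [abs_of_pos (by omega : (0 : ℤ) < SigW G (coreSet G σ dp dm 1) σ v u)]
    exact hdiff
  · have h1 := psiZ_inv_neg hz'.symm
    simp only [neg_neg]
    rw [abs_of_neg (by omega : SigW G (coreSet G σ dp dm 1) σ v u < 0)]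
    omega
end

section
/- There is an absolute constant c > 0 such that the following holds. Let d+ > d− > 0 satisfy d+ − d− ≥ c√(d+ ln d+) with d+ bounded below by a sufficiently large absolute constant, let G be a locally finite graph with σ : V(G) → {±1}, let C be the core, and let v be a vertex such that G_v is a finite tree. Let σ*_{↑v} : C_v → {±1} be any optimal extension of σ_{↑v}, i.e. one with Σ_{{u,w}∈E(G_v)} (1 − σ*_{↑v}(u)σ*_{↑v}(w))/2 = cut(G_v, σ_{↑v}). Then Σ_{w∈∂v} (1 − σ*_{↑v}(v)σ*_{↑v}(w))/2 = Σ_{w∈∂v} 1{μ*_{w→v} = −ψ̃(μ*_v)}. -/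
open Filter Topology

attribute [local instance] Classical.propDecidable

set_option linter.unusedVariables false

noncomputable section AuxFLC

open SimpleGraph

namespace FLC

lemma psiZ_cases (x : ℤ) : psiZ x = -1 ∨ psiZ x = 0 ∨ psiZ x = 1 := by
  unfold psiZ; omega

lemma psiZ_bounds (x : ℤ) : -1 ≤ psiZ x ∧ psiZ x ≤ 1 := by unfold psiZ; omega

lemma psiZ_eq_zero {x : ℤ} : psiZ x = 0 ↔ x = 0 := by unfold psiZ; omega

lemma psiZ_eq_one {x : ℤ} (h : 2 ≤ x) : psiZ x = 1 := by unfold psiZ; omega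

lemma psiZ_eq_negone {x : ℤ} (h : x ≤ -2) : psiZ x = -1 := by unfold psiZ; omega

lemma tpsiZ_cases (x : ℤ) : tpsiZ x = 1 ∨ tpsiZ x = -1 := by
  unfold tpsiZ; split <;> simp

variable {V : Type*} (G : SimpleGraph V) [∀ v : V, Fintype (G.neighborSet v)]
  (σ : V → ℤ) (K : Set V) (v : V)

lemma wpMsg_bounds (hσ : ∀ x, σ x = 1 ∨ σ x = -1) :
    ∀ (t : ℕ) (u x : V), -1 ≤ wpMsg G Set.univ σ t u x ∧ wpMsg G Set.univ σ t u x ≤ 1 := by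
  intro t
  induction t with
  | zero => intro u x; simp only [wpMsg, Set.mem_univ, if_true]; rcases hσ u with h | h <;> omega
  | succ t ih => intro u x; simp only [wpMsg]; exact psiZ_bounds _

lemma wpMsg_succ (U : Set V) (t : ℕ) (u x : V) :
    wpMsg G U σ (t+1) u x = psiZ (∑ y ∈ (G.neighborFinset u).erase x, wpMsg G U σ t y u) := rfl

/-! ### CvSet basics -/

lemma mem_CvSet_self : v ∈ CvSet G K v :=
  Set.mem_iUnion.2 ⟨0, Or.inl rfl⟩

lemma adj_mem_CvSet {w : V} (h : G.Adj v w) : w ∈ CvSet G K v :=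
  Set.mem_iUnion.2 ⟨0, Or.inr h⟩

lemma CvSet_closed {z x : V} (hz : z ∈ CvSet G K v) (hzK : z ∉ K) (h : G.Adj z x) :
    x ∈ CvSet G K v := by
  obtain ⟨t, ht⟩ := Set.mem_iUnion.1 hz
  refine Set.mem_iUnion.2 ⟨t + 1, Or.inr ?_⟩
  exact Set.mem_iUnion₂.2 ⟨z, ⟨ht, hzK⟩, h⟩

lemma GvG_adj {x y : V} : (GvG G K v).Adj x y ↔ G.Adj x y ∧ x ∈ CvSet G K v ∧ y ∈ CvSet G K v :=
  Iff.rfl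

lemma GvG_le : GvG G K v ≤ G := fun _ _ h => h.1

/-! ### Transfer between the ambient restricted graph and the induced subtype graph -/

lemma reach_up {S : Set V} {H : SimpleGraph V} {H' : SimpleGraph S}
    (hS : ∀ ⦃x y⦄, H.Adj x y → x ∈ S ∧ y ∈ S)
    (hA : ∀ ⦃x y⦄ (hx : x ∈ S) (hy : y ∈ S), H.Adj x y → H'.Adj ⟨x, hx⟩ ⟨y, hy⟩)
    {a b : V} (ha : a ∈ S) (hb : b ∈ S) (h : H.Reachable a b) :
    H'.Reachable ⟨a, ha⟩ ⟨b, hb⟩ := by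
  obtain ⟨p⟩ := h
  induction p with
  | nil => rfl
  | @cons x y z hxy p ih =>
    exact (SimpleGraph.Adj.reachable (hA ha (hS hxy).2 hxy)).trans (ih (hS hxy).2 hb)

lemma reach_down {S : Set V} {H : SimpleGraph V} {H' : SimpleGraph S}
    (hA : ∀ ⦃x y : S⦄, H'.Adj x y → H.Adj x y)
    {a b : S} (h : H'.Reachable a b) : H.Reachable (a : V) (b : V) := by
  obtain ⟨p⟩ := h
  induction p with
  | nil => rfl
  | @cons x y z hxy p ih => exact (SimpleGraph.Adj.reachable (hA hxy)).trans ih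

variable (htree : (G.induce (CvSet G K v)).IsTree)

include htree in
lemma T_reachable {a b : V} (ha : a ∈ CvSet G K v) (hb : b ∈ CvSet G K v) :
    (GvG G K v).Reachable a b := by
  have h := htree.isConnected.preconnected ⟨a, ha⟩ ⟨b, hb⟩
  refine reach_down (H := GvG G K v) ?_ h
  rintro ⟨x, hx⟩ ⟨y, hy⟩ hxy
  exact ⟨hxy, hx, hy⟩

include htree in
lemma T_bridge {a b : V} (hab : (GvG G K v).Adj a b) :
    ¬ ((GvG G K v).deleteEdges {s(a, b)}).Reachable a b := by
  intro hreach
  have hbr := (SimpleGraph.isAcyclic_iff_forall_adj_isBridge.1 htree.IsAcyclic)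
    (show (G.induce (CvSet G K v)).Adj ⟨a, hab.2.1⟩ ⟨b, hab.2.2⟩ from hab.1)
  rw [SimpleGraph.isBridge_iff] at hbr
  refine hbr ?_
  have : ((G.induce (CvSet G K v)).deleteEdges {s(⟨a, hab.2.1⟩, ⟨b, hab.2.2⟩)}).Reachable
      ⟨a, hab.2.1⟩ ⟨b, hab.2.2⟩ := by
    refine reach_up (H := (GvG G K v).deleteEdges {s(a, b)}) ?_ ?_ hab.2.1 hab.2.2 hreach
    · intro x y hxy
      exact ⟨(hxy.1).2.1, (hxy.1).2.2⟩
    · intro x y hx hy hxy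
      rw [SimpleGraph.deleteEdges_adj] at hxy ⊢
      refine ⟨hxy.1.1, ?_⟩
      intro hmem
      apply hxy.2
      simp only [Set.mem_singleton_iff] at hmem ⊢
      rw [Sym2.eq_iff] at hmem ⊢
      rcases hmem with ⟨h1, h2⟩ | ⟨h1, h2⟩
      · exact Or.inl ⟨congrArg Subtype.val h1, congrArg Subtype.val h2⟩
      · exact Or.inr ⟨congrArg Subtype.val h1, congrArg Subtype.val h2⟩
  exact this

set_option linter.unusedSectionVars false
set_option maxHeartbeats 1000000

lemma mem_S_of_reach {H : SimpleGraph V} (hle : H ≤ GvG G K v) {z q : V}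
    (hz : z ∈ CvSet G K v) (h : H.Reachable z q) : q ∈ CvSet G K v := by
  obtain ⟨p⟩ := h
  induction p with
  | nil => exact hz
  | @cons x y z hxy p ih => exact ih (hle hxy).2.2

lemma reach_of_mem_support {H : SimpleGraph V} {a b q : V} (p : H.Walk a b)
    (hq : q ∈ p.support) : H.Reachable a q := ⟨p.takeUntil q hq⟩

lemma dist_lt_of_mem_support {H : SimpleGraph V} {y z : V} {P : H.Walk y v}
    (hP : P.length = H.dist y v) (hz : z ∈ P.support) (hzy : z ≠ y) :
    H.dist z v < H.dist y v := by
  have h1 : H.dist z v ≤ (P.dropUntil z hz).length := SimpleGraph.dist_le _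
  have h2 : (P.takeUntil z hz).length + (P.dropUntil z hz).length = P.length := by
    have := congrArg SimpleGraph.Walk.length (P.take_spec hz)
    rwa [SimpleGraph.Walk.length_append] at this
  have h3 : (P.takeUntil z hz).length ≠ 0 := fun h0 =>
    hzy ((SimpleGraph.Walk.eq_of_length_eq_zero h0).symm)
  omega

include htree in
lemma dist_le_adj {a b : V} (hadj : (GvG G K v).Adj a b) :
    (GvG G K v).dist a v ≤ (GvG G K v).dist b v + 1 := by
  obtain ⟨P, hPl⟩ := (T_reachable G K v htree hadj.2.2 (mem_CvSet_self G K v)).exists_walk_length_eq_dist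
  have := SimpleGraph.dist_le (SimpleGraph.Walk.cons hadj P)
  simpa [hPl] using this

include htree in
lemma adj_dist_ne {a b : V} (hadj : (GvG G K v).Adj a b) :
    (GvG G K v).dist a v ≠ (GvG G K v).dist b v := by
  intro heq
  obtain ⟨Pa, _, hPa⟩ := (T_reachable G K v htree hadj.2.1 (mem_CvSet_self G K v)).exists_path_of_dist
  obtain ⟨Pb, _, hPb⟩ := (T_reachable G K v htree hadj.2.2 (mem_CvSet_self G K v)).exists_path_of_dist
  have hbs : b ∉ Pa.support := fun hmem => by
    have := dist_lt_of_mem_support v hPa hmem hadj.ne'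
    omega
  have has : a ∉ Pb.support := fun hmem => by
    have := dist_lt_of_mem_support v hPb hmem hadj.ne
    omega
  have hPaE : ∀ e ∈ Pa.edges, e ∉ ({s(a,b)} : Set (Sym2 V)) := by
    intro e he hmem
    rw [Set.mem_singleton_iff] at hmem; subst hmem
    exact hbs (SimpleGraph.Walk.snd_mem_support_of_mem_edges Pa he)
  have hPbE : ∀ e ∈ Pb.edges, e ∉ ({s(a,b)} : Set (Sym2 V)) := by
    intro e he hmem
    rw [Set.mem_singleton_iff] at hmem; subst hmem
    exact has (SimpleGraph.Walk.fst_mem_support_of_mem_edges Pb he)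
  have ra : ((GvG G K v).deleteEdges {s(a,b)}).Reachable a v := ⟨Pa.toDeleteEdges _ hPaE⟩
  have rb : ((GvG G K v).deleteEdges {s(a,b)}).Reachable b v := ⟨Pb.toDeleteEdges _ hPbE⟩
  exact T_bridge G K v htree hadj (ra.trans rb.symm)

include htree in
lemma parent_unique {z y₁ y₂ : V} (h1 : (GvG G K v).Adj z y₁) (h2 : (GvG G K v).Adj z y₂)
    (d1 : (GvG G K v).dist y₁ v + 1 = (GvG G K v).dist z v)
    (d2 : (GvG G K v).dist y₂ v + 1 = (GvG G K v).dist z v) : y₁ = y₂ := by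
  by_contra hne
  obtain ⟨Pa, _, hPa⟩ := (T_reachable G K v htree h1.2.2 (mem_CvSet_self G K v)).exists_path_of_dist
  obtain ⟨Pb, _, hPb⟩ := (T_reachable G K v htree h2.2.2 (mem_CvSet_self G K v)).exists_path_of_dist
  have hza : z ∉ Pa.support := fun hmem => by
    have := dist_lt_of_mem_support v hPa hmem h1.ne
    omega
  have hzb : z ∉ Pb.support := fun hmem => by
    have := dist_lt_of_mem_support v hPb hmem h2.ne
    omega
  have hPaE : ∀ e ∈ Pa.edges, e ∉ ({s(z,y₂)} : Set (Sym2 V)) := by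
    intro e he hmem
    rw [Set.mem_singleton_iff] at hmem; subst hmem
    exact hza (SimpleGraph.Walk.fst_mem_support_of_mem_edges Pa he)
  have hPbE : ∀ e ∈ Pb.edges, e ∉ ({s(z,y₂)} : Set (Sym2 V)) := by
    intro e he hmem
    rw [Set.mem_singleton_iff] at hmem; subst hmem
    exact hzb (SimpleGraph.Walk.fst_mem_support_of_mem_edges Pb he)
  have hedge : ((GvG G K v).deleteEdges {s(z,y₂)}).Adj z y₁ := by
    rw [SimpleGraph.deleteEdges_adj]
    refine ⟨h1, ?_⟩
    intro hmem
    rw [Set.mem_singleton_iff, Sym2.eq_iff] at hmem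
    rcases hmem with ⟨_, h⟩ | ⟨h, _⟩
    · exact hne h
    · exact h2.ne h
  have ra : ((GvG G K v).deleteEdges {s(z,y₂)}).Reachable y₁ v := ⟨Pa.toDeleteEdges _ hPaE⟩
  have rb : ((GvG G K v).deleteEdges {s(z,y₂)}).Reachable y₂ v := ⟨Pb.toDeleteEdges _ hPbE⟩
  exact T_bridge G K v htree h2 ((hedge.reachable.trans ra).trans rb.symm)

include htree in
lemma parent_spec {z : V} (hz : z ∈ CvSet G K v) (hzv : z ≠ v) :
    (GvG G K v).Adj z (parentOf G K v z) ∧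
      (GvG G K v).dist (parentOf G K v z) v + 1 = (GvG G K v).dist z v := by
  have hreach := T_reachable G K v htree hz (mem_CvSet_self G K v)
  have hpos : 0 < (GvG G K v).dist z v := hreach.pos_dist_of_ne hzv
  obtain ⟨P, hPl⟩ := hreach.exists_walk_length_eq_dist
  have hex : ∃ x, (GvG G K v).Adj z x ∧ (GvG G K v).dist x v + 1 = (GvG G K v).dist z v := by
    cases P with
    | nil => simp only [SimpleGraph.Walk.length_nil] at hPl; omega
    | @cons _ y _ hzy Q =>
      refine ⟨y, hzy, ?_⟩
      have h1 : (GvG G K v).dist y v ≤ Q.length := SimpleGraph.dist_le Q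
      have h2 : (GvG G K v).dist z v ≤ (GvG G K v).dist y v + 1 :=
        dist_le_adj G K v htree hzy
      simp only [SimpleGraph.Walk.length_cons] at hPl
      omega
  exact Classical.epsilon_spec hex

include htree in
lemma child_spec {z x : V} (hz : z ∈ CvSet G K v) (hzv : z ≠ v)
    (hadj : (GvG G K v).Adj z x) (hx : x ≠ parentOf G K v z) :
    parentOf G K v x = z ∧ x ≠ v ∧ (GvG G K v).dist x v = (GvG G K v).dist z v + 1 := by
  obtain ⟨hpa, hpd⟩ := parent_spec G K v htree hz hzv
  have hne := adj_dist_ne G K v htree hadj.symm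
  have h1 := dist_le_adj G K v htree hadj
  have h2 := dist_le_adj G K v htree hadj.symm
  have hdx : (GvG G K v).dist x v = (GvG G K v).dist z v + 1 := by
    rcases Nat.lt_or_ge ((GvG G K v).dist x v) ((GvG G K v).dist z v) with h | h
    · exfalso
      have : (GvG G K v).dist x v + 1 = (GvG G K v).dist z v := by omega
      exact hx (parent_unique G K v htree hadj hpa this hpd)
    · omega
  have hxv : x ≠ v := by
    intro h; subst h
    rw [SimpleGraph.dist_self] at hdx
    omega
  refine ⟨?_, hxv, hdx⟩
  obtain ⟨hpa', hpd'⟩ := parent_spec G K v htree hadj.2.2 hxv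
  exact parent_unique G K v htree hpa' hadj.symm hpd' (by omega)

lemma GdelG_eq (z : V) :
    GdelG G K v z = (GvG G K v).deleteEdges {s(z, parentOf G K v z)} := rfl

lemma Gdel_le (z : V) : GdelG G K v z ≤ GvG G K v := SimpleGraph.deleteEdges_le _

lemma Cdir_self (z : V) : z ∈ Cdir G K v z := SimpleGraph.Reachable.refl z

lemma Cdir_subset_S {z : V} (hz : z ∈ CvSet G K v) : Cdir G K v z ⊆ CvSet G K v :=
  fun _ hq => mem_S_of_reach G K v (Gdel_le G K v z) hz hq

lemma walk_del {H : SimpleGraph V} (hle : H ≤ GvG G K v) {a b : V} (x y : V) (W : H.Walk a b)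
    (hx : x ∉ W.support) :
    ∃ W' : ((GvG G K v).deleteEdges {s(x, y)}).Walk a b, W'.length = W.length := by
  have hedges : ∀ e ∈ W.edges, e ∈ ((GvG G K v).deleteEdges {s(x, y)}).edgeSet := by
    intro e he
    rw [SimpleGraph.edgeSet_deleteEdges]
    refine ⟨SimpleGraph.edgeSet_mono hle (W.edges_subset_edgeSet he), ?_⟩
    intro hmem
    rw [Set.mem_singleton_iff] at hmem; subst hmem
    exact hx (SimpleGraph.Walk.fst_mem_support_of_mem_edges W he)
  exact ⟨W.transfer _ hedges, SimpleGraph.Walk.length_transfer _ _⟩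

lemma reach_del {H : SimpleGraph V} (hle : H ≤ GvG G K v) {a b : V} (x y : V)
    (h : H.Reachable a b) (hx : ¬ H.Reachable a x) :
    ((GvG G K v).deleteEdges {s(x, y)}).Reachable a b := by
  obtain ⟨W⟩ := h
  obtain ⟨W', _⟩ := walk_del G K v hle x y W (fun hmem => hx (reach_of_mem_support W hmem))
  exact ⟨W'⟩

include htree in
lemma parent_not_mem_Cdir {z : V} (hz : z ∈ CvSet G K v) (hzv : z ≠ v) :
    parentOf G K v z ∉ Cdir G K v z := fun h =>
  T_bridge G K v htree (parent_spec G K v htree hz hzv).1 h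

include htree in
lemma v_not_mem_Cdir {z : V} (hz : z ∈ CvSet G K v) (hzv : z ≠ v) : v ∉ Cdir G K v z := by
  intro h
  obtain ⟨hpa, hpd⟩ := parent_spec G K v htree hz hzv
  obtain ⟨P, _, hP⟩ :=
    (T_reachable G K v htree hpa.2.2 (mem_CvSet_self G K v)).exists_path_of_dist
  have hzs : z ∉ P.support := fun hmem => by
    have := dist_lt_of_mem_support v hP hmem hpa.ne
    omega
  obtain ⟨W', _⟩ := walk_del G K v (le_refl (GvG G K v)) z (parentOf G K v z) P hzs
  have r1 : (GdelG G K v z).Reachable (parentOf G K v z) v := ⟨W'⟩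
  have h' : (GdelG G K v z).Reachable z v := h
  exact T_bridge G K v htree hpa (h'.trans r1.symm)

include htree in
lemma child_pu {z x : V} (hz : z ∈ CvSet G K v) (hzv : z ≠ v)
    (hadj : (GvG G K v).Adj z x) (hxp : x ≠ parentOf G K v z) :
    GdelG G K v x = (GvG G K v).deleteEdges {s(x, z)} := by
  rw [GdelG_eq, (child_spec G K v htree hz hzv hadj hxp).1]

include htree in
lemma child_Cdir {z x : V} (hz : z ∈ CvSet G K v) (hzv : z ≠ v)
    (hadj : (GvG G K v).Adj z x) (hxp : x ≠ parentOf G K v z) :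
    Cdir G K v x ⊆ Cdir G K v z ∧ z ∉ Cdir G K v x := by
  obtain ⟨hpx, hxv, _⟩ := child_spec G K v htree hz hzv hadj hxp
  have hznot : z ∉ Cdir G K v x := by
    have := parent_not_mem_Cdir G K v htree hadj.2.2 hxv
    rwa [hpx] at this
  refine ⟨?_, hznot⟩
  intro q hq
  have h1 : ((GvG G K v).deleteEdges {s(z, parentOf G K v z)}).Reachable x q :=
    reach_del G K v (Gdel_le G K v x) z (parentOf G K v z) hq hznot
  have hedge : ((GvG G K v).deleteEdges {s(z, parentOf G K v z)}).Adj z x := by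
    rw [SimpleGraph.deleteEdges_adj]
    refine ⟨hadj, ?_⟩
    intro hmem
    rw [Set.mem_singleton_iff, Sym2.eq_iff] at hmem
    rcases hmem with ⟨_, h⟩ | ⟨h, h'⟩
    · exact hxp h
    · exact hadj.ne h'.symm
  exact (hedge.reachable.trans h1 : (GdelG G K v z).Reachable z q)

include htree in
lemma Cdir_disjoint {z y₁ y₂ : V} (hz : z ∈ CvSet G K v) (hzv : z ≠ v)
    (h1 : (GvG G K v).Adj z y₁) (hp1 : y₁ ≠ parentOf G K v z)
    (h2 : (GvG G K v).Adj z y₂) (hp2 : y₂ ≠ parentOf G K v z)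
    (hne : y₁ ≠ y₂) {q : V} (hq1 : q ∈ Cdir G K v y₁) : q ∉ Cdir G K v y₂ := by
  intro hq2
  have hz1 : z ∉ Cdir G K v y₁ := (child_Cdir G K v htree hz hzv h1 hp1).2
  have hz2 : z ∉ Cdir G K v y₂ := (child_Cdir G K v htree hz hzv h2 hp2).2
  have hq1' : ((GvG G K v).deleteEdges {s(y₁, z)}).Reachable y₁ q := by
    rw [← child_pu G K v htree hz hzv h1 hp1]; exact hq1
  have hq2' : ((GvG G K v).deleteEdges {s(y₂, z)}).Reachable y₂ q := by
    rw [← child_pu G K v htree hz hzv h2 hp2]; exact hq2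
  have r1 : ((GvG G K v).deleteEdges {s(z, y₂)}).Reachable y₁ q :=
    reach_del G K v (SimpleGraph.deleteEdges_le _) z y₂ hq1' (fun hr => hz1
      (show (GdelG G K v y₁).Reachable y₁ z by
        rw [child_pu G K v htree hz hzv h1 hp1]; exact hr))
  have r2 : ((GvG G K v).deleteEdges {s(z, y₂)}).Reachable y₂ q :=
    reach_del G K v (SimpleGraph.deleteEdges_le _) z y₂ hq2' (fun hr => hz2
      (show (GdelG G K v y₂).Reachable y₂ z by
        rw [child_pu G K v htree hz hzv h2 hp2]; exact hr))
  have redge : ((GvG G K v).deleteEdges {s(z, y₂)}).Adj z y₁ := by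
    rw [SimpleGraph.deleteEdges_adj]
    refine ⟨h1, ?_⟩
    intro hmem
    rw [Set.mem_singleton_iff, Sym2.eq_iff] at hmem
    rcases hmem with ⟨_, h⟩ | ⟨h, _⟩
    · exact hne h
    · exact h2.ne h
  exact T_bridge G K v htree h2 ((redge.reachable.trans r1).trans r2.symm)

include htree in
lemma Cdir_partition {z q : V} (hz : z ∈ CvSet G K v) (hzv : z ≠ v)
    (hq : q ∈ Cdir G K v z) (hqz : q ≠ z) :
    ∃ x, (GvG G K v).Adj z x ∧ x ≠ parentOf G K v z ∧ q ∈ Cdir G K v x := by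
  obtain ⟨P, hPp, _⟩ := (hq : (GdelG G K v z).Reachable z q).exists_path_of_dist
  cases P with
  | nil => exact absurd rfl hqz
  | @cons _ x _ h W' =>
    rw [SimpleGraph.Walk.cons_isPath_iff] at hPp
    have hdel := SimpleGraph.deleteEdges_adj.mp h
    have hxp : x ≠ parentOf G K v z := by
      intro hx
      exact hdel.2 (by rw [hx]; rfl)
    refine ⟨x, hdel.1, hxp, ?_⟩
    obtain ⟨W'', _⟩ := walk_del G K v (Gdel_le G K v z) z x W' hPp.2
    show (GdelG G K v x).Reachable x q
    rw [child_pu G K v htree hz hzv hdel.1 hxp,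
      show s(x, z) = s(z, x) from Sym2.eq_swap]
    exact ⟨W''⟩

include htree in
lemma crossing_edge {z p q : V} (hz : z ∈ CvSet G K v) (hzv : z ≠ v)
    (hp : p ∈ Cdir G K v z) (hq : q ∉ Cdir G K v z) (hadj : (GvG G K v).Adj p q) :
    p = z ∧ q = parentOf G K v z := by
  have hs : s(p, q) = s(z, parentOf G K v z) := by
    by_contra hne
    apply hq
    have hA : (GdelG G K v z).Adj p q := by
      rw [GdelG_eq, SimpleGraph.deleteEdges_adj]
      exact ⟨hadj, by simpa using hne⟩
    exact hp.trans hA.reachable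
  rw [Sym2.eq_iff] at hs
  rcases hs with ⟨h1, h2⟩ | ⟨h1, h2⟩
  · exact ⟨h1, h2⟩
  · exfalso
    rw [h1] at hp
    exact parent_not_mem_Cdir G K v htree hz hzv hp

lemma hgt_le_of {H : SimpleGraph V} {a : V} {B : ℕ}
    (h : ∀ y, H.Reachable a y → H.dist a y ≤ B) : hgt H a ≤ B := by
  refine csSup_le ⟨0, ?_⟩ ?_
  · exact ⟨a, SimpleGraph.Reachable.refl a, SimpleGraph.dist_self⟩
  · rintro d ⟨y, hy, rfl⟩
    exact h y hy

lemma le_hgt {H : SimpleGraph V} {a y : V} (hfin' : {u | H.Reachable a u}.Finite)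
    (hy : H.Reachable a y) : H.dist a y ≤ hgt H a :=
  le_csSup (Set.Finite.bddAbove (hfin'.image _)) ⟨y, hy, rfl⟩

variable (hfin : (CvSet G K v).Finite)

include htree hfin in
lemma hdir_child {z x : V} (hz : z ∈ CvSet G K v) (hzv : z ≠ v)
    (hadj : (GvG G K v).Adj z x) (hxp : x ≠ parentOf G K v z) :
    hdir G K v x + 1 ≤ hdir G K v z := by
  obtain ⟨hpx, hxv, _⟩ := child_spec G K v htree hz hzv hadj hxp
  have hsub := child_Cdir G K v htree hz hzv hadj hxp
  have hfinreach : {u | (GdelG G K v z).Reachable z u}.Finite :=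
    hfin.subset (Cdir_subset_S G K v hz)
  have hedge : (GdelG G K v z).Adj z x := by
    rw [GdelG_eq, SimpleGraph.deleteEdges_adj]
    refine ⟨hadj, ?_⟩
    intro hmem
    rw [Set.mem_singleton_iff, Sym2.eq_iff] at hmem
    rcases hmem with ⟨_, h⟩ | ⟨h, h'⟩
    · exact hxp h
    · exact hadj.ne h'.symm
  -- key distance claim
  have hkey : ∀ y, y ∈ Cdir G K v x →
      (GdelG G K v x).dist x y + 1 ≤ (GdelG G K v z).dist z y := by
    intro y hy
    have hyz : (GdelG G K v z).Reachable z y := hsub.1 hy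
    obtain ⟨P, hPp, hPl⟩ := hyz.exists_path_of_dist
    have hy' : ((GvG G K v).deleteEdges {s(x, z)}).Reachable x y := by
      rw [← child_pu G K v htree hz hzv hadj hxp]; exact hy
    have hxsup : x ∈ P.support := by
      by_contra hxs
      obtain ⟨W', _⟩ := walk_del G K v (Gdel_le G K v z) x z P hxs
      exact hsub.2 (show (GdelG G K v x).Reachable x z by
        rw [child_pu G K v htree hz hzv hadj hxp]
        exact hy'.trans (SimpleGraph.Reachable.symm
          (⟨W'⟩ : ((GvG G K v).deleteEdges {s(x, z)}).Reachable z y)))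
    have hlen : (P.takeUntil x hxsup).length + (P.dropUntil x hxsup).length = P.length := by
      have := congrArg SimpleGraph.Walk.length (P.take_spec hxsup)
      rwa [SimpleGraph.Walk.length_append] at this
    have htake : (P.takeUntil x hxsup).length ≠ 0 := fun h0 =>
      hadj.ne (SimpleGraph.Walk.eq_of_length_eq_zero h0)
    have hzdrop : z ∉ (P.dropUntil x hxsup).support := by
      intro hmem
      have hnodup := hPp.support_nodup
      rw [← P.take_spec hxsup, SimpleGraph.Walk.support_append] at hnodup
      have hdisj := List.disjoint_of_nodup_append hnodup
      have hz1 : z ∈ (P.takeUntil x hxsup).support := SimpleGraph.Walk.start_mem_support _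
      have hz2 : z ∈ (P.dropUntil x hxsup).support.tail := by
        have := SimpleGraph.Walk.support_eq_cons (P.dropUntil x hxsup)
        rw [this] at hmem
        rcases List.mem_cons.mp hmem with h | h
        · exact absurd h hadj.ne
        · exact h
      exact hdisj hz1 hz2
    obtain ⟨W', hW'⟩ := walk_del G K v (Gdel_le G K v z) z x (P.dropUntil x hxsup) hzdrop
    have hd : (GdelG G K v x).dist x y ≤ W'.length := by
      rw [child_pu G K v htree hz hzv hadj hxp, show s(x, z) = s(z, x) from Sym2.eq_swap]
      exact SimpleGraph.dist_le W'
    have hdrop : (P.dropUntil x hxsup).length ≤ P.length - 1 := by omega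
    have := SimpleGraph.Walk.length_dropUntil_le P hxsup
    omega
  have h1 : 1 ≤ hdir G K v z := by
    have hdx : (GdelG G K v z).dist z x ≤ hdir G K v z :=
      (le_hgt hfinreach hedge.reachable : _)
    have : (GdelG G K v z).dist z x ≠ 0 := by
      rw [SimpleGraph.dist_ne_zero_iff_ne_and_reachable]
      exact ⟨hadj.ne, hedge.reachable⟩
    omega
  have h2 : hdir G K v x ≤ hdir G K v z - 1 := by
    refine hgt_le_of ?_
    intro y hy
    have := hkey y hy
    have hle : (GdelG G K v z).dist z y ≤ hdir G K v z := le_hgt hfinreach (hsub.1 hy)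
    omega
  omega

lemma sqrt_big {dp : ℝ} (hD : 10 ^ 6 ≤ dp) : 1000 ≤ Real.sqrt (dp * Real.log dp) := by
  have hdp : (0 : ℝ) < dp := lt_of_lt_of_le (by norm_num) hD
  have hlog : 1 ≤ Real.log dp := by
    rw [Real.le_log_iff_exp_le hdp]
    calc Real.exp 1 ≤ 2.7182818286 := le_of_lt Real.exp_one_lt_d9
    _ ≤ dp := by linarith
  have h1 : (10 : ℝ) ^ 6 ≤ dp * Real.log dp := by nlinarith
  rw [Real.le_sqrt' (by norm_num)]
  linarith

lemma core_msg {dp dm : ℝ} (hσ : ∀ x, σ x = 1 ∨ σ x = -1) (hD : 10 ^ 6 ≤ dp)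
    (hgap : Real.sqrt (dp * Real.log dp) ≤ dp - dm) :
    ∀ (t : ℕ) (u : V), u ∈ coreSet G σ dp dm 1 → ∀ x, wpMsg G Set.univ σ t u x = σ u := by
  intro t
  induction t with
  | zero => intro u _ x; simp [wpMsg]
  | succ t ih =>
    intro u hu x
    obtain ⟨U, hU, huU⟩ := hu
    have hUsub : U ⊆ coreSet G σ dp dm 1 := fun y hy => Set.mem_sUnion.2 ⟨U, hU, hy⟩
    obtain ⟨hplus, hminus, hout⟩ := hU u huU
    classical
    set N := (G.neighborFinset u).erase x with hN
    set Pf := (G.neighborFinset u).filter (fun y => σ u * σ y = 1) with hPf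
    set Mf := (G.neighborFinset u).filter (fun y => σ u * σ y = -1) with hMf
    set A := N.filter (fun y => y ∈ U ∧ σ u * σ y = 1) with hA
    have hPcard : {w | G.Adj u w ∧ σ u * σ w = 1}.ncard = Pf.card := by
      rw [← Set.ncard_coe_finset]
      congr 1
      ext w
      simp [hPf, SimpleGraph.mem_neighborFinset]
    have hMcard : {w | G.Adj u w ∧ σ u * σ w = -1}.ncard = Mf.card := by
      rw [← Set.ncard_coe_finset]
      congr 1
      ext w
      simp [hMf, SimpleGraph.mem_neighborFinset]
    -- |A| ≥ |Pf| - 101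
    have hUPf : (Pf.filter (fun y => y ∉ U)).card ≤ 100 := by
      have hfin2 : ({w | G.Adj u w} \ U).Finite :=
        Set.Finite.subset (G.neighborSet u).toFinite (fun w hw => hw.1)
      have hsub : ((Pf.filter (fun y => y ∉ U)) : Set V) ⊆ {w | G.Adj u w} \ U := by
        intro w hw
        simp only [Finset.coe_filter, Set.mem_setOf_eq, hPf, Finset.mem_filter,
          SimpleGraph.mem_neighborFinset] at hw
        exact ⟨hw.1.1, hw.2⟩
      calc (Pf.filter (fun y => y ∉ U)).card
          = ((Pf.filter (fun y => y ∉ U)) : Set V).ncard := (Set.ncard_coe_finset _).symm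
        _ ≤ ({w | G.Adj u w} \ U).ncard := Set.ncard_le_ncard hsub hfin2
        _ ≤ 100 := hout
    have hAcard : (Pf.card : ℤ) - 101 ≤ A.card := by
      have hsub : (Pf.filter (fun y => y ∈ U)).erase x ⊆ A := by
        intro y hy
        rw [Finset.mem_erase] at hy
        obtain ⟨hyx, hy2⟩ := hy
        rw [Finset.mem_filter] at hy2
        rw [hA, Finset.mem_filter, hN, Finset.mem_erase]
        rw [hPf, Finset.mem_filter] at hy2
        exact ⟨⟨hyx, hy2.1.1⟩, hy2.2, hy2.1.2⟩
      have h1 : (Pf.filter (fun y => y ∈ U)).card - 1 ≤ ((Pf.filter (fun y => y ∈ U)).erase x).card :=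
        Finset.pred_card_le_card_erase
      have h2 : (Pf.filter (fun y => y ∈ U)).card + (Pf.filter (fun y => y ∉ U)).card = Pf.card :=
        Finset.card_filter_add_card_filter_not _
      have h3 := Finset.card_le_card hsub
      omega
    -- |N| ≤ |Pf| + |Mf|
    have hNcard : N.card ≤ Pf.card + Mf.card := by
      have hsub : N ⊆ Pf ∪ Mf := by
        intro y hy
        rw [hN, Finset.mem_erase] at hy
        rw [Finset.mem_union, hPf, hMf, Finset.mem_filter, Finset.mem_filter]
        rcases hσ u with h | h <;> rcases hσ y with h' | h' <;>
          simp [h, h', hy.2]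
      exact le_trans (Finset.card_le_card hsub) (Finset.card_union_le _ _)
    -- integer bound via reals
    have hkey : (2 : ℤ) ≤ 2 * (A.card : ℤ) - N.card := by
      have hs := sqrt_big hD
      set s := Real.sqrt (dp * Real.log dp) with hsdef
      rw [hPcard] at hplus
      rw [hMcard] at hminus
      rw [abs_le] at hplus hminus
      have hAr : (Pf.card : ℝ) - 101 ≤ (A.card : ℝ) := by exact_mod_cast hAcard
      have hNr : (N.card : ℝ) ≤ (Pf.card : ℝ) + Mf.card := by exact_mod_cast hNcard
      have : (2 : ℝ) ≤ 2 * (A.card : ℝ) - N.card := by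
        have e1 : (1 : ℝ) / 4 * s = s / 4 := by ring
        rw [e1] at hplus hminus
        linarith [hplus.1, hplus.2, hminus.1, hminus.2]
      exact_mod_cast this
    -- sum bound
    have hsum : 2 * (A.card : ℤ) - N.card ≤ ∑ y ∈ N, σ u * wpMsg G Set.univ σ t y u := by
      have hptwise : ∀ y ∈ N, (if y ∈ A then (1 : ℤ) else -1) ≤ σ u * wpMsg G Set.univ σ t y u := by
        intro y hy
        by_cases hyA : y ∈ A
        · simp only [hyA, if_true]
          rw [hA, Finset.mem_filter] at hyA
          rw [ih y (hUsub hyA.2.1) u]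
          omega
        · simp only [hyA, if_false]
          have hb := wpMsg_bounds G σ hσ t y u
          rcases hσ u with h | h <;> rw [h] <;> omega
      have h1 := Finset.sum_le_sum hptwise
      have h2 : (∑ y ∈ N, (if y ∈ A then (1 : ℤ) else -1)) = 2 * (A.card : ℤ) - N.card := by
        have he : ∀ y, (if y ∈ A then (1 : ℤ) else -1) = (if y ∈ A then (2 : ℤ) else 0) - 1 := by
          intro y; split <;> ring
        simp_rw [he]
        rw [Finset.sum_sub_distrib, Finset.sum_ite_mem,
          Finset.inter_eq_right.mpr (Finset.filter_subset _ _), Finset.sum_const,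
          Finset.sum_const, nsmul_eq_mul, nsmul_eq_mul]
        push_cast
        ring
      omega
    have hfinal : (2 : ℤ) ≤ ∑ y ∈ N, σ u * wpMsg G Set.univ σ t y u := le_trans hkey hsum
    rw [← Finset.mul_sum] at hfinal
    rw [wpMsg_succ, ← hN]
    rcases hσ u with h | h
    · rw [h] at hfinal ⊢
      rw [one_mul] at hfinal
      exact psiZ_eq_one hfinal
    · rw [h] at hfinal ⊢
      rw [neg_one_mul] at hfinal
      exact psiZ_eq_negone (by omega)

include htree hfin in
lemma msg_stable (hKmsg : ∀ u ∈ K, ∀ (t : ℕ) (x : V), wpMsg G Set.univ σ t u x = σ u) :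
    ∀ (n : ℕ) (z : V), z ∈ CvSet G K v → z ≠ v → hdir G K v z ≤ n →
    ∀ t, hdir G K v z ≤ t →
      wpMsg G Set.univ σ (t + 1) z (parentOf G K v z) = muStarDir G K σ v z := by
  intro n
  induction n using Nat.strong_induction_on with
  | _ n ih =>
    intro z hz hzv hdn t ht
    by_cases hzK : z ∈ K
    · rw [hKmsg z hzK]
      simp [muStarDir, hKmsg z hzK]
    · have hrec : ∀ s, hdir G K v z ≤ s →
          wpMsg G Set.univ σ (s + 1) z (parentOf G K v z)
            = psiZ (∑ y ∈ (G.neighborFinset z).erase (parentOf G K v z),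
                muStarDir G K σ v y) := by
        intro s hs
        rw [wpMsg_succ]
        congr 1
        apply Finset.sum_congr rfl
        intro y hy
        rw [Finset.mem_erase] at hy
        have hGadj : G.Adj z y := (SimpleGraph.mem_neighborFinset _ _ _).1 hy.2
        have hyS : y ∈ CvSet G K v := CvSet_closed G K v hz hzK hGadj
        have hTadj : (GvG G K v).Adj z y := ⟨hGadj, hz, hyS⟩
        obtain ⟨hpy, hyv, _⟩ := child_spec G K v htree hz hzv hTadj hy.1
        have hlt : hdir G K v y + 1 ≤ hdir G K v z :=
          hdir_child G K v htree hfin hz hzv hTadj hy.1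
        cases s with
        | zero => omega
        | succ s' =>
          have hih := ih (hdir G K v y) (by omega) y hyS hyv (le_refl _) s' (by omega)
          rw [hpy] at hih
          exact hih
      rw [hrec t ht,
        show muStarDir G K σ v z
          = wpMsg G Set.univ σ (hdir G K v z + 1) z (parentOf G K v z) from rfl,
        hrec (hdir G K v z) (le_refl _)]

omit htree hfin in
lemma muStar_core (hKmsg : ∀ u ∈ K, ∀ (t : ℕ) (x : V), wpMsg G Set.univ σ t u x = σ u)
    {z : V} (hzK : z ∈ K) : muStarDir G K σ v z = σ z := by
  simp [muStarDir, hKmsg z hzK]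

include htree hfin in
lemma muStar_rec (hKmsg : ∀ u ∈ K, ∀ (t : ℕ) (x : V), wpMsg G Set.univ σ t u x = σ u)
    {z : V} (hz : z ∈ CvSet G K v) (hzv : z ≠ v) (hzK : z ∉ K) :
    muStarDir G K σ v z
      = psiZ (∑ y ∈ (G.neighborFinset z).erase (parentOf G K v z), muStarDir G K σ v y) := by
  show wpMsg G Set.univ σ (hdir G K v z + 1) z (parentOf G K v z) = _
  rw [wpMsg_succ]
  congr 1
  apply Finset.sum_congr rfl
  intro y hy
  rw [Finset.mem_erase] at hy
  have hGadj : G.Adj z y := (SimpleGraph.mem_neighborFinset _ _ _).1 hy.2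
  have hyS : y ∈ CvSet G K v := CvSet_closed G K v hz hzK hGadj
  have hTadj : (GvG G K v).Adj z y := ⟨hGadj, hz, hyS⟩
  obtain ⟨hpy, hyv, _⟩ := child_spec G K v htree hz hzv hTadj hy.1
  have hlt : hdir G K v y + 1 ≤ hdir G K v z :=
    hdir_child G K v htree hfin hz hzv hTadj hy.1
  cases hd : hdir G K v z with
  | zero => omega
  | succ d' =>
    have hih := msg_stable G σ K v htree hfin hKmsg (hdir G K v y) y hyS hyv (le_refl _) d'
      (by omega)
    rw [hpy] at hih
    exact hih

omit htree hfin in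
lemma muStar_bounds (hσ : ∀ x, σ x = 1 ∨ σ x = -1) (z : V) :
    -1 ≤ muStarDir G K σ v z ∧ muStarDir G K σ v z ≤ 1 :=
  wpMsg_bounds G σ hσ _ _ _

def cutP (τ : V → ℤ) (A : Set V) : Finset (V × V) :=
  (hfin.toFinset ×ˢ hfin.toFinset).filter
    (fun p => (GvG G K v).Adj p.1 p.2 ∧ p.1 ∈ A ∧ p.2 ∈ A ∧ τ p.1 ≠ τ p.2)

omit htree in
lemma mem_cutP {τ : V → ℤ} {A : Set V} {p : V × V} :
    p ∈ cutP G K v hfin τ A ↔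
      (GvG G K v).Adj p.1 p.2 ∧ p.1 ∈ A ∧ p.2 ∈ A ∧ τ p.1 ≠ τ p.2 := by
  unfold cutP
  rw [Finset.mem_filter, Finset.mem_product, Set.Finite.mem_toFinset, Set.Finite.mem_toFinset]
  constructor
  · exact fun h => h.2
  · exact fun h => ⟨⟨h.1.2.1, h.1.2.2⟩, h⟩

omit htree in
lemma cutP_congr {τ τ' : V → ℤ} {A : Set V} (h : ∀ q ∈ A, τ q = τ' q) :
    cutP G K v hfin τ A = cutP G K v hfin τ' A := by
  apply Finset.ext
  intro p
  rw [mem_cutP G K v hfin, mem_cutP G K v hfin]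
  constructor
  · rintro ⟨h1, h2, h3, h4⟩
    exact ⟨h1, h2, h3, by rw [← h _ h2, ← h _ h3]; exact h4⟩
  · rintro ⟨h1, h2, h3, h4⟩
    exact ⟨h1, h2, h3, by rw [h _ h2, h _ h3]; exact h4⟩

include htree in
lemma children_facts {z y : V} (hz : z ∈ CvSet G K v) (hzv : z ≠ v) (hzK : z ∉ K)
    (hy : y ∈ (G.neighborFinset z).erase (parentOf G K v z)) :
    (GvG G K v).Adj z y ∧ y ≠ parentOf G K v z ∧ y ∈ CvSet G K v ∧ y ≠ v ∧
      parentOf G K v y = z ∧ z ∉ Cdir G K v y ∧ Cdir G K v y ⊆ Cdir G K v z := by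
  rw [Finset.mem_erase] at hy
  have hGadj : G.Adj z y := (SimpleGraph.mem_neighborFinset _ _ _).1 hy.2
  have hyS : y ∈ CvSet G K v := CvSet_closed G K v hz hzK hGadj
  have hTadj : (GvG G K v).Adj z y := ⟨hGadj, hz, hyS⟩
  obtain ⟨hpy, hyv, _⟩ := child_spec G K v htree hz hzv hTadj hy.1
  have hsub := child_Cdir G K v htree hz hzv hTadj hy.1
  exact ⟨hTadj, hy.1, hyS, hyv, hpy, hsub.2, hsub.1⟩

include htree hfin in
lemma cut_decomp {z : V} (hz : z ∈ CvSet G K v) (hzv : z ≠ v) (hzK : z ∉ K) (τ : V → ℤ) :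
    (cutP G K v hfin τ (Cdir G K v z)).card
      = 2 * (((G.neighborFinset z).erase (parentOf G K v z)).filter
              (fun y => τ z ≠ τ y)).card
        + ∑ y ∈ (G.neighborFinset z).erase (parentOf G K v z),
            (cutP G K v hfin τ (Cdir G K v y)).card := by
  classical
  set Ch := (G.neighborFinset z).erase (parentOf G K v z) with hCh
  set E1 := (Ch.filter (fun y => τ z ≠ τ y)).image (fun y => ((z, y) : V × V)) with hE1
  set E2 := (Ch.filter (fun y => τ z ≠ τ y)).image (fun y => ((y, z) : V × V)) with hE2
  have hzCh : z ∉ Ch := by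
    rw [hCh, Finset.mem_erase, SimpleGraph.mem_neighborFinset]
    rintro ⟨-, h⟩
    exact G.irrefl h
  have hchf := fun (y : V) (hy : y ∈ Ch) => children_facts G K v htree hz hzv hzK hy
  -- the decomposition as sets
  have hdec : cutP G K v hfin τ (Cdir G K v z)
      = (E1 ∪ E2) ∪ Ch.biUnion (fun y => cutP G K v hfin τ (Cdir G K v y)) := by
    apply Finset.ext
    intro p
    rw [Finset.mem_union, Finset.mem_union, Finset.mem_biUnion, mem_cutP G K v hfin]
    constructor
    · rintro ⟨hadj, h1, h2, hne⟩
      by_cases hp1 : p.1 = z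
      · left; left
        rw [hE1, Finset.mem_image]
        have hp2ch : p.2 ∈ Ch := by
          rw [hCh, Finset.mem_erase, SimpleGraph.mem_neighborFinset]
          constructor
          · intro hpz
            rw [hpz] at h2
            exact parent_not_mem_Cdir G K v htree hz hzv h2
          · rw [← hp1]; exact hadj.1
        refine ⟨p.2, Finset.mem_filter.2 ⟨hp2ch, by rw [← hp1]; exact hne⟩, ?_⟩
        rw [← hp1]
      · by_cases hp2 : p.2 = z
        · left; right
          rw [hE2, Finset.mem_image]
          have hp1ch : p.1 ∈ Ch := by
            rw [hCh, Finset.mem_erase, SimpleGraph.mem_neighborFinset]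
            constructor
            · intro hpz
              rw [hpz] at h1
              exact parent_not_mem_Cdir G K v htree hz hzv h1
            · rw [← hp2]; exact hadj.symm.1
          refine ⟨p.1, Finset.mem_filter.2 ⟨hp1ch, by rw [← hp2]; intro h; exact hne h.symm⟩, ?_⟩
          rw [← hp2]
        · right
          obtain ⟨x, hxadj, hxp, hp1x⟩ := Cdir_partition G K v htree hz hzv h1 hp1
          have hxch : x ∈ Ch := by
            rw [hCh, Finset.mem_erase, SimpleGraph.mem_neighborFinset]
            exact ⟨hxp, hxadj.1⟩
          refine ⟨x, hxch, (mem_cutP G K v hfin).2 ⟨hadj, hp1x, ?_, hne⟩⟩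
          by_contra hp2x
          obtain ⟨hc1, hc2⟩ := crossing_edge G K v htree (hchf x hxch).2.2.1
            (hchf x hxch).2.2.2.1 hp1x hp2x hadj
          rw [(hchf x hxch).2.2.2.2.1] at hc2
          exact hp2 hc2
    · rintro ((hp | hp) | ⟨y, hy, hp⟩)
      · rw [hE1, Finset.mem_image] at hp
        obtain ⟨y, hy, rfl⟩ := hp
        rw [Finset.mem_filter] at hy
        exact ⟨(hchf y hy.1).1, Cdir_self G K v z,
          (hchf y hy.1).2.2.2.2.2.2 (Cdir_self G K v y), hy.2⟩
      · rw [hE2, Finset.mem_image] at hp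
        obtain ⟨y, hy, rfl⟩ := hp
        rw [Finset.mem_filter] at hy
        exact ⟨((hchf y hy.1).1).symm, (hchf y hy.1).2.2.2.2.2.2 (Cdir_self G K v y),
          Cdir_self G K v z, fun h => hy.2 h.symm⟩
      · rw [mem_cutP G K v hfin] at hp
        exact ⟨hp.1, (hchf y hy).2.2.2.2.2.2 hp.2.1, (hchf y hy).2.2.2.2.2.2 hp.2.2.1, hp.2.2.2⟩
  rw [hdec]
  -- cardinalities
  have hE1card : E1.card = (Ch.filter (fun y => τ z ≠ τ y)).card :=
    Finset.card_image_of_injective _ (fun a b h => (Prod.ext_iff.1 h).2)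
  have hE2card : E2.card = (Ch.filter (fun y => τ z ≠ τ y)).card :=
    Finset.card_image_of_injective _ (fun a b h => (Prod.ext_iff.1 h).1)
  have hd12 : Disjoint E1 E2 := by
    rw [Finset.disjoint_left]
    intro p hp1 hp2
    rw [hE1, Finset.mem_image] at hp1
    rw [hE2, Finset.mem_image] at hp2
    obtain ⟨y, hy, rfl⟩ := hp1
    obtain ⟨y', hy', he⟩ := hp2
    have : y' = z := (Prod.ext_iff.1 he).1
    rw [this] at hy'
    exact hzCh (Finset.mem_filter.1 hy').1
  have hdE : Disjoint (E1 ∪ E2) (Ch.biUnion (fun y => cutP G K v hfin τ (Cdir G K v y))) := by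
    rw [Finset.disjoint_left]
    intro p hp1 hp2
    rw [Finset.mem_biUnion] at hp2
    obtain ⟨y, hy, hp⟩ := hp2
    rw [mem_cutP G K v hfin] at hp
    rw [Finset.mem_union] at hp1
    have hz1 : z ∉ Cdir G K v y := (hchf y hy).2.2.2.2.2.1
    rcases hp1 with hp1 | hp1
    · rw [hE1, Finset.mem_image] at hp1
      obtain ⟨y', _, he⟩ := hp1
      have : p.1 = z := by rw [← he]
      rw [this] at hp
      exact hz1 hp.2.1
    · rw [hE2, Finset.mem_image] at hp1
      obtain ⟨y', _, he⟩ := hp1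
      have : p.2 = z := by rw [← he]
      rw [this] at hp
      exact hz1 hp.2.2.1
  have hbj : ∀ y₁ ∈ Ch, ∀ y₂ ∈ Ch, y₁ ≠ y₂ →
      Disjoint (cutP G K v hfin τ (Cdir G K v y₁)) (cutP G K v hfin τ (Cdir G K v y₂)) := by
    intro y₁ h1 y₂ h2 hne
    rw [Finset.disjoint_left]
    intro p hp1 hp2
    rw [mem_cutP G K v hfin] at hp1 hp2
    exact Cdir_disjoint G K v htree hz hzv (hchf y₁ h1).1 (hchf y₁ h1).2.1
      (hchf y₂ h2).1 (hchf y₂ h2).2.1 hne hp1.2.1 hp2.2.1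
  rw [Finset.card_union_of_disjoint hdE, Finset.card_union_of_disjoint hd12,
    Finset.card_biUnion hbj, hE1card, hE2card]
  ring

include htree hfin in
lemma exchange (hσ : ∀ x, σ x = 1 ∨ σ x = -1)
    (hKmsg : ∀ u ∈ K, ∀ (t : ℕ) (x : V), wpMsg G Set.univ σ t u x = σ u) :
    ∀ (n : ℕ) (z : V), z ∈ CvSet G K v → z ≠ v → hdir G K v z ≤ n →
      muStarDir G K σ v z = 0 →
      ∀ τ : V → ℤ, (∀ x, τ x = 1 ∨ τ x = -1) →
      (∀ x ∈ ({w | w ∈ CvSet G K v ∧ w ≠ v ∧ muStarDir G K σ v w ≠ 0} ∪ {v} : Set V),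
        τ x = if x = v then tpsiZ (muStarV G K σ v) else muStarDir G K σ v x) →
      ∀ a : ℤ, a = 1 ∨ a = -1 →
      ∃ τ' : V → ℤ, (∀ x, τ' x = 1 ∨ τ' x = -1) ∧
        (∀ x ∈ ({w | w ∈ CvSet G K v ∧ w ≠ v ∧ muStarDir G K σ v w ≠ 0} ∪ {v} : Set V),
          τ' x = if x = v then tpsiZ (muStarV G K σ v) else muStarDir G K σ v x) ∧
        (∀ x, x ∉ Cdir G K v z → τ' x = τ x) ∧ τ' z = a ∧
        (cutP G K v hfin τ' (Cdir G K v z)).card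
          ≤ (cutP G K v hfin τ (Cdir G K v z)).card := by
  intro n
  induction n using Nat.strong_induction_on with
  | _ n ih =>
    intro z hz hzv hdn hm0 τ hτ1 hτb a ha
    classical
    have hzK : z ∉ K := by
      intro hK
      rw [muStar_core G σ K v hKmsg hK] at hm0
      rcases hσ z with h | h <;> omega
    set Ch := (G.neighborFinset z).erase (parentOf G K v z) with hCh
    have hchf := fun (y : V) (hy : y ∈ Ch) => children_facts G K v htree hz hzv hzK hy
    have hzCh : z ∉ Ch := by
      rw [hCh, Finset.mem_erase, SimpleGraph.mem_neighborFinset]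
      rintro ⟨-, h⟩
      exact G.irrefl h
    have hsum0 : ∑ y ∈ Ch, muStarDir G K σ v y = 0 := by
      have hr := muStar_rec G σ K v htree hfin hKmsg hz hzv hzK
      rw [hm0] at hr
      exact psiZ_eq_zero.1 hr.symm
    have huniq : ∀ y₁ ∈ Ch, ∀ y₂ ∈ Ch, ∀ q, q ∈ Cdir G K v y₁ → q ∈ Cdir G K v y₂ →
        y₁ = y₂ := by
      intro y₁ h1 y₂ h2 q hq1 hq2
      by_contra hne
      exact Cdir_disjoint G K v htree hz hzv (hchf y₁ h1).1 (hchf y₁ h1).2.1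
        (hchf y₂ h2).1 (hchf y₂ h2).2.1 hne hq1 hq2
    have hIH : ∀ y, y ∈ Ch → muStarDir G K σ v y = 0 →
        ∃ τ' : V → ℤ, (∀ x, τ' x = 1 ∨ τ' x = -1) ∧
          (∀ x ∈ ({w | w ∈ CvSet G K v ∧ w ≠ v ∧ muStarDir G K σ v w ≠ 0} ∪ {v} : Set V),
            τ' x = if x = v then tpsiZ (muStarV G K σ v) else muStarDir G K σ v x) ∧
          (∀ x, x ∉ Cdir G K v y → τ' x = τ x) ∧ τ' y = a ∧
          (cutP G K v hfin τ' (Cdir G K v y)).card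
            ≤ (cutP G K v hfin τ (Cdir G K v y)).card := by
      intro y hy h0
      have hlt : hdir G K v y + 1 ≤ hdir G K v z :=
        hdir_child G K v htree hfin hz hzv (hchf y hy).1 (hchf y hy).2.1
      exact ih (hdir G K v y) (by omega) y (hchf y hy).2.2.1 (hchf y hy).2.2.2.1
        (le_refl _) h0 τ hτ1 hτb a ha
    set g : V → (V → ℤ) := fun y =>
      if h : y ∈ Ch ∧ muStarDir G K σ v y = 0 then Classical.choose (hIH y h.1 h.2) else τ
      with hg
    have hgspec : ∀ y (h : y ∈ Ch ∧ muStarDir G K σ v y = 0),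
        (∀ x, g y x = 1 ∨ g y x = -1) ∧
        (∀ x ∈ ({w | w ∈ CvSet G K v ∧ w ≠ v ∧ muStarDir G K σ v w ≠ 0} ∪ {v} : Set V),
          g y x = if x = v then tpsiZ (muStarV G K σ v) else muStarDir G K σ v x) ∧
        (∀ x, x ∉ Cdir G K v y → g y x = τ x) ∧ g y y = a ∧
        (cutP G K v hfin (g y) (Cdir G K v y)).card
          ≤ (cutP G K v hfin τ (Cdir G K v y)).card := by
      intro y h
      have : g y = Classical.choose (hIH y h.1 h.2) := by
        rw [hg]; simp only [dif_pos h]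
      rw [this]
      exact Classical.choose_spec (hIH y h.1 h.2)
    set τ' : V → ℤ := fun q =>
      if q = z then a
      else if h : ∃ y, (y ∈ Ch ∧ muStarDir G K σ v y = 0) ∧ q ∈ Cdir G K v y then
        g (Classical.choose h) q
      else τ q with hτ'
    have hτ'z : τ' z = a := by rw [hτ']; simp
    have hτ'in : ∀ y (hy : y ∈ Ch) (h0 : muStarDir G K σ v y = 0),
        ∀ q, q ∈ Cdir G K v y → τ' q = g y q := by
      intro y hy h0 q hq
      have hqz : q ≠ z := fun h => (hchf y hy).2.2.2.2.2.1 (h ▸ hq)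
      have hex : ∃ y', (y' ∈ Ch ∧ muStarDir G K σ v y' = 0) ∧ q ∈ Cdir G K v y' :=
        ⟨y, ⟨hy, h0⟩, hq⟩
      have hspec := Classical.choose_spec hex
      have hcy : Classical.choose hex = y := huniq _ hspec.1.1 _ hy q hspec.2 hq
      rw [hτ']
      simp only [if_neg hqz, dif_pos hex]
      rw [hcy]
    have hτ'out : ∀ q, q ∉ Cdir G K v z → τ' q = τ q := by
      intro q hq
      have hqz : q ≠ z := fun h => hq (h ▸ Cdir_self G K v z)
      have hnex : ¬ ∃ y', (y' ∈ Ch ∧ muStarDir G K σ v y' = 0) ∧ q ∈ Cdir G K v y' := by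
        rintro ⟨y', hy', hq'⟩
        exact hq ((hchf y' hy'.1).2.2.2.2.2.2 hq')
      rw [hτ']
      simp only [if_neg hqz, dif_neg hnex]
    have hτ'noz : ∀ q, q ≠ z →
        (∀ y, y ∈ Ch → muStarDir G K σ v y = 0 → q ∉ Cdir G K v y) → τ' q = τ q := by
      intro q hqz hall
      have hnex : ¬ ∃ y', (y' ∈ Ch ∧ muStarDir G K σ v y' = 0) ∧ q ∈ Cdir G K v y' := by
        rintro ⟨y', hy', hq'⟩
        exact hall y' hy'.1 hy'.2 hq'
      rw [hτ']
      simp only [if_neg hqz, dif_neg hnex]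
    have hτ'val : ∀ y ∈ Ch,
        τ' y = if muStarDir G K σ v y = 0 then a else muStarDir G K σ v y := by
      intro y hy
      by_cases h0 : muStarDir G K σ v y = 0
      · rw [if_pos h0, hτ'in y hy h0 y (Cdir_self G K v y)]
        exact (hgspec y ⟨hy, h0⟩).2.2.2.1
      · rw [if_neg h0]
        have hyz : y ≠ z := fun h => hzCh (h ▸ hy)
        have hne : ∀ y', y' ∈ Ch → muStarDir G K σ v y' = 0 → y ∉ Cdir G K v y' := by
          intro y' hy' h0' hmem
          exact h0 (by rw [huniq y hy y' hy' y (Cdir_self G K v y) hmem]; exact h0')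
        rw [hτ'noz y hyz hne,
          hτb y (Set.mem_union_left _ ⟨(hchf y hy).2.2.1, (hchf y hy).2.2.2.1, h0⟩),
          if_neg (hchf y hy).2.2.2.1]
    refine ⟨τ', ?_, ?_, hτ'out, hτ'z, ?_⟩
    · intro x
      rw [hτ']
      by_cases h1 : x = z
      · simp only [if_pos h1]; exact ha
      · simp only [if_neg h1]
        by_cases h2 : ∃ y, (y ∈ Ch ∧ muStarDir G K σ v y = 0) ∧ x ∈ Cdir G K v y
        · simp only [dif_pos h2]
          exact (hgspec _ (Classical.choose_spec h2).1).1 x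
        · simp only [dif_neg h2]; exact hτ1 x
    · intro x hx
      have hxz : x ≠ z := by
        intro h; subst h
        rcases hx with hx | hx
        · exact hx.2.2 hm0
        · exact hzv hx
      rw [hτ']
      simp only [if_neg hxz]
      by_cases h2 : ∃ y, (y ∈ Ch ∧ muStarDir G K σ v y = 0) ∧ x ∈ Cdir G K v y
      · simp only [dif_pos h2]
        exact (hgspec _ (Classical.choose_spec h2).1).2.1 x hx
      · simp only [dif_neg h2]; exact hτb x hx
    · rw [cut_decomp G K v htree hfin hz hzv hzK τ, cut_decomp G K v htree hfin hz hzv hzK τ']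
      rw [← hCh]
      have hτz : τ z = 1 ∨ τ z = -1 := hτ1 z
      have hedge' : (Ch.filter (fun y => τ' z ≠ τ' y)).card
          = (Ch.filter (fun y => muStarDir G K σ v y = -a)).card := by
        congr 1
        apply Finset.filter_congr
        intro y hy
        rw [hτ'z, hτ'val y hy]
        have hb := muStar_bounds G σ K v hσ y
        by_cases h0 : muStarDir G K σ v y = 0
        · rw [if_pos h0, h0]
          rcases ha with h | h <;> subst h <;> simp
        · rw [if_neg h0]
          rcases ha with h | h <;> subst h <;> omega
      have hedgeτ : (Ch.filter (fun y => muStarDir G K σ v y = -(τ z))).card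
          ≤ (Ch.filter (fun y => τ z ≠ τ y)).card := by
        apply Finset.card_le_card
        intro y hy
        rw [Finset.mem_filter] at hy ⊢
        refine ⟨hy.1, ?_⟩
        have h0 : muStarDir G K σ v y ≠ 0 := by
          rcases hτz with h | h <;> rw [hy.2, h] <;> omega
        have hby := hτb y (Set.mem_union_left _
          ⟨(hchf y hy.1).2.2.1, (hchf y hy.1).2.2.2.1, h0⟩)
        rw [if_neg (hchf y hy.1).2.2.2.1] at hby
        rw [hby, hy.2]
        rcases hτz with h | h <;> rw [h] <;> omega
      have hbal : (Ch.filter (fun y => muStarDir G K σ v y = 1)).card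
          = (Ch.filter (fun y => muStarDir G K σ v y = -1)).card := by
        have hpt : ∀ y ∈ Ch, muStarDir G K σ v y
            = (if muStarDir G K σ v y = 1 then (1 : ℤ) else 0)
              - (if muStarDir G K σ v y = -1 then (1 : ℤ) else 0) := by
          intro y hy
          have hb := muStar_bounds G σ K v hσ y
          split_ifs <;> omega
        rw [Finset.sum_congr rfl hpt, Finset.sum_sub_distrib, Finset.sum_boole,
          Finset.sum_boole] at hsum0
        have : ((Ch.filter (fun y => muStarDir G K σ v y = 1)).card : ℤ)
            = ((Ch.filter (fun y => muStarDir G K σ v y = -1)).card : ℤ) := by omega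
        exact_mod_cast this
      have hcnt : (Ch.filter (fun y => muStarDir G K σ v y = -a)).card
          = (Ch.filter (fun y => muStarDir G K σ v y = -(τ z))).card := by
        rcases ha with h | h <;> rcases hτz with h' | h' <;> rw [h, h'] <;>
          simp only [neg_neg] <;> first | rfl | exact hbal | exact hbal.symm
      have hchild : ∑ y ∈ Ch, (cutP G K v hfin τ' (Cdir G K v y)).card
          ≤ ∑ y ∈ Ch, (cutP G K v hfin τ (Cdir G K v y)).card := by
        apply Finset.sum_le_sum
        intro y hy
        by_cases h0 : muStarDir G K σ v y = 0
        · rw [cutP_congr G K v hfin (fun q hq => hτ'in y hy h0 q hq)]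
          exact (hgspec y ⟨hy, h0⟩).2.2.2.2
        · apply le_of_eq
          apply congrArg
          apply cutP_congr
          intro q hq
          have hqz : q ≠ z := fun h => (hchf y hy).2.2.2.2.2.1 (h ▸ hq)
          have hall : ∀ y', y' ∈ Ch → muStarDir G K σ v y' = 0 → q ∉ Cdir G K v y' := by
            intro y' hy' h0' hmem
            exact h0 (by rw [huniq y hy y' hy' q hq hmem]; exact h0')
          exact hτ'noz q hqz hall
      rw [hedge', hcnt]
      omega

omit htree in
lemma ncard_cutP (τ : V → ℤ) :
    {p : V × V | (GvG G K v).Adj p.1 p.2 ∧ τ p.1 ≠ τ p.2}.ncard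
      = (cutP G K v hfin τ Set.univ).card := by
  rw [← Set.ncard_coe_finset]
  congr 1
  ext p
  rw [Finset.mem_coe, mem_cutP G K v hfin]
  simp only [Set.mem_setOf_eq, Set.mem_univ, true_and]

lemma even_card_swap {α : Type*} : ∀ (n : ℕ) (s : Finset (α × α)), s.card = n →
    (∀ p ∈ s, (p.2, p.1) ∈ s) → (∀ p ∈ s, p.1 ≠ p.2) → Even s.card := by
  classical
  intro n
  induction n using Nat.strong_induction_on with
  | _ n ih =>
    intro s hcard hsym hirr
    rcases s.eq_empty_or_nonempty with rfl | ⟨p, hp⟩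
    · simp
    · have hps : (p.2, p.1) ∈ s := hsym p hp
      have hpd : p ≠ (p.2, p.1) := by
        intro h
        exact hirr p hp (by rw [Prod.ext_iff] at h; exact h.1)
      set s' := s \ {p, (p.2, p.1)} with hs'
      have hsubset : ({p, (p.2, p.1)} : Finset (α × α)) ⊆ s := by
        intro q hq
        rcases Finset.mem_insert.1 hq with rfl | hq
        · exact hp
        · rw [Finset.mem_singleton] at hq; subst hq; exact hps
      have hcard2 : ({p, (p.2, p.1)} : Finset (α × α)).card = 2 := by
        rw [Finset.card_insert_of_notMem (by simpa using hpd), Finset.card_singleton]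
      have hc' : s'.card = s.card - 2 := by rw [hs', Finset.card_sdiff_of_subset hsubset, hcard2]
      have hsym' : ∀ q ∈ s', (q.2, q.1) ∈ s' := by
        intro q hq
        rw [hs', Finset.mem_sdiff] at hq ⊢
        refine ⟨hsym q hq.1, ?_⟩
        intro hmem
        apply hq.2
        rcases Finset.mem_insert.1 hmem with h | h
        · rw [Finset.mem_insert, Finset.mem_singleton]
          right
          rw [Prod.ext_iff] at h ⊢
          exact ⟨h.2, h.1⟩
        · rw [Finset.mem_singleton, Prod.ext_iff] at h
          rw [Finset.mem_insert]
          left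
          rw [Prod.ext_iff]
          exact ⟨h.2, h.1⟩
      have hirr' : ∀ q ∈ s', q.1 ≠ q.2 := fun q hq => hirr q (Finset.mem_sdiff.1 hq).1
      have h2le : 2 ≤ s.card := by
        have := Finset.card_le_card hsubset
        omega
      have hlt : s'.card < n := by
        have hpos : 0 < s.card := Finset.card_pos.2 ⟨p, hp⟩
        omega
      obtain ⟨k, hk⟩ := ih s'.card hlt s' rfl hsym' hirr'
      exact ⟨k + 1, by omega⟩

end FLC

open FLC


/-- Corollary 3.5: if `σ*_{↑v}` is an optimal extension of `σ_{↑v}` to a cut of `G_v`, then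
`∑_{w∈∂v} (1 - σ*_{↑v}(v)σ*_{↑v}(w))/2 = ∑_{w∈∂v} 1{μ*_{w→v} = -ψ̃(μ*_v)}`. -/
theorem first_level_cut_count :
    ∃ c : ℝ, 0 < c ∧ ∃ D : ℝ, ∀ dp dm : ℝ,
    0 < dm → dm < dp → D ≤ dp → c * Real.sqrt (dp * Real.log dp) ≤ dp - dm →
    ∀ (V : Type*) (G : SimpleGraph V) [∀ v : V, Fintype (G.neighborSet v)] (σ : V → ℤ),
    (∀ x : V, σ x = 1 ∨ σ x = -1) →
    ∀ K : Set V, K = coreSet G σ dp dm c →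
    ∀ v : V, (CvSet G K v).Finite → (G.induce (CvSet G K v)).IsTree →
    ∀ τ : V → ℤ, (∀ x : V, τ x = 1 ∨ τ x = -1) →
      (∀ x ∈ ({w | w ∈ CvSet G K v ∧ w ≠ v ∧ muStarDir G K σ v w ≠ 0} ∪ {v} : Set V),
        τ x = if x = v then tpsiZ (muStarV G K σ v) else muStarDir G K σ v x) →
      2 * cutW (GvG G K v)
          ({w | w ∈ CvSet G K v ∧ w ≠ v ∧ muStarDir G K σ v w ≠ 0} ∪ {v})
          (fun x => if x = v then tpsiZ (muStarV G K σ v) else muStarDir G K σ v x)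
        = {p : V × V | (GvG G K v).Adj p.1 p.2 ∧ τ p.1 ≠ τ p.2}.ncard →
      (∑ w ∈ G.neighborFinset v, (1 - ((τ v * τ w : ℤ) : ℝ)) / 2)
        = ∑ w ∈ G.neighborFinset v,
            (if muStarDir G K σ v w = - tpsiZ (muStarV G K σ v) then (1 : ℝ) else 0) := by
  refine ⟨1, one_pos, 10 ^ 6, ?_⟩
  intro dp dm hdm hdmp hD hgap V G inst σ hσ K hK v hfin htree τ hτ1 hτb hopt
  rw [one_mul] at hgap
  classical
  have hKmsg : ∀ u ∈ K, ∀ (t : ℕ) (x : V), wpMsg G Set.univ σ t u x = σ u := by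
    intro u hu t x
    rw [hK] at hu
    exact core_msg G σ hσ hD hgap t u hu x
  -- σ-boundary at v
  have hτv : τ v = tpsiZ (muStarV G K σ v) := by
    have h := hτb v (Set.mem_union_right _ rfl)
    rwa [if_pos rfl] at h
  -- zero-message neighbours of v take the colour of v in an optimal cut
  have hzero : ∀ w, G.Adj v w → muStarDir G K σ v w = 0 → τ w = τ v := by
    intro w hadj hm0
    by_contra hne
    have hwS : w ∈ CvSet G K v := adj_mem_CvSet G K v hadj
    have hwv : w ≠ v := hadj.ne'
    have hTadj : (GvG G K v).Adj w v := ⟨hadj.symm, hwS, mem_CvSet_self G K v⟩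
    have hpuv : parentOf G K v w = v := by
      obtain ⟨hpa, hpd⟩ := parent_spec G K v htree hwS hwv
      refine parent_unique G K v htree hpa hTadj hpd ?_
      rw [SimpleGraph.dist_self, zero_add]
      exact (((GvG G K v).dist_eq_one_iff_adj).2 hTadj).symm
    obtain ⟨τ', hτ'1, hτ'b, hτ'out, hτ'w, hτ'cut⟩ :=
      exchange G σ K v htree hfin hσ hKmsg (hdir G K v w) w hwS hwv (le_refl _) hm0
        τ hτ1 hτb (τ v) (hτ1 v)
    set s1 := cutP G K v hfin τ Set.univ with hs1
    set s2 := cutP G K v hfin τ' Set.univ with hs2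
    set In2 : V × V → Prop := fun p => p.1 ∈ Cdir G K v w ∧ p.2 ∈ Cdir G K v w with hIn2
    have hsplit1 : s1.card
        = (s1.filter In2).card + (s1.filter (fun p => ¬ In2 p)).card :=
      (Finset.card_filter_add_card_filter_not (fun p => In2 p)).symm
    have hsplit2 : s2.card
        = (s2.filter In2).card + (s2.filter (fun p => ¬ In2 p)).card :=
      (Finset.card_filter_add_card_filter_not (fun p => In2 p)).symm
    have hin1 : s1.filter In2 = cutP G K v hfin τ (Cdir G K v w) := by
      apply Finset.ext
      intro p
      rw [Finset.mem_filter, hs1, mem_cutP G K v hfin, mem_cutP G K v hfin]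
      simp only [Set.mem_univ, true_and, hIn2]
      tauto
    have hin2 : s2.filter In2 = cutP G K v hfin τ' (Cdir G K v w) := by
      apply Finset.ext
      intro p
      rw [Finset.mem_filter, hs2, mem_cutP G K v hfin, mem_cutP G K v hfin]
      simp only [Set.mem_univ, true_and, hIn2]
      tauto
    have hvw : v ∉ Cdir G K v w := v_not_mem_Cdir G K v htree hwS hwv
    have hwin : w ∈ Cdir G K v w := Cdir_self G K v w
    have hWV : ((w, v) : V × V) ∈ s1.filter (fun p => ¬ In2 p) := by
      rw [Finset.mem_filter, hs1, mem_cutP G K v hfin]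
      exact ⟨⟨hTadj, trivial, trivial, hne⟩, fun h => hvw h.2⟩
    have hVW : ((v, w) : V × V) ∈ s1.filter (fun p => ¬ In2 p) := by
      rw [Finset.mem_filter, hs1, mem_cutP G K v hfin]
      exact ⟨⟨hTadj.symm, trivial, trivial, fun h => hne h.symm⟩, fun h => hvw h.1⟩
    have hτ'v : τ' v = τ v := hτ'out v hvw
    have hsub : s2.filter (fun p => ¬ In2 p)
        ⊆ (s1.filter (fun p => ¬ In2 p)) \ {((w, v) : V × V), (v, w)} := by
      intro p hp
      rw [Finset.mem_filter, hs2, mem_cutP G K v hfin] at hp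
      obtain ⟨⟨hadj', -, -, hne'⟩, hpn⟩ := hp
      by_cases h1 : p.1 ∈ Cdir G K v w
      · by_cases h2 : p.2 ∈ Cdir G K v w
        · exact absurd ⟨h1, h2⟩ hpn
        · exfalso
          obtain ⟨hc1, hc2⟩ := crossing_edge G K v htree hwS hwv h1 h2 hadj'
          rw [hpuv] at hc2
          apply hne'
          rw [hc1, hc2, hτ'w, hτ'v]
      · by_cases h2 : p.2 ∈ Cdir G K v w
        · exfalso
          obtain ⟨hc1, hc2⟩ := crossing_edge G K v htree hwS hwv h2 h1 hadj'.symm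
          rw [hpuv] at hc2
          apply hne'
          rw [hc1, hc2, hτ'w, hτ'v]
        · rw [Finset.mem_sdiff]
          constructor
          · rw [Finset.mem_filter, hs1, mem_cutP G K v hfin]
            refine ⟨⟨hadj', trivial, trivial, ?_⟩, hpn⟩
            rw [← hτ'out p.1 h1, ← hτ'out p.2 h2]
            exact hne'
          · intro hmem
            rcases Finset.mem_insert.1 hmem with h | h
            · rw [Prod.ext_iff] at h
              exact h1 (by rw [h.1]; exact hwin)
            · rw [Finset.mem_singleton, Prod.ext_iff] at h
              exact h2 (by rw [h.2]; exact hwin)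
    have hpairsub : ({((w, v) : V × V), (v, w)} : Finset (V × V))
        ⊆ s1.filter (fun p => ¬ In2 p) := by
      intro q hq
      rcases Finset.mem_insert.1 hq with rfl | hq
      · exact hWV
      · rw [Finset.mem_singleton] at hq; subst hq; exact hVW
    have hpaircard : ({((w, v) : V × V), (v, w)} : Finset (V × V)).card = 2 := by
      rw [Finset.card_insert_of_notMem, Finset.card_singleton]
      rw [Finset.mem_singleton]
      intro h
      rw [Prod.ext_iff] at h
      exact hwv h.1
    have hout2 : (s2.filter (fun p => ¬ In2 p)).card + 2
        ≤ (s1.filter (fun p => ¬ In2 p)).card := by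
      have h1 := Finset.card_le_card hsub
      have h2 := Finset.card_le_card hpairsub
      rw [Finset.card_sdiff_of_subset hpairsub, hpaircard] at h1
      omega
    have htot : s2.card + 2 ≤ s1.card := by
      rw [hsplit1, hsplit2, hin1, hin2]
      omega
    -- evenness of s2
    have heven : Even s2.card := by
      refine even_card_swap s2.card s2 rfl ?_ ?_
      · intro p hp
        rw [hs2, mem_cutP G K v hfin] at hp ⊢
        exact ⟨hp.1.symm, trivial, trivial, fun h => hp.2.2.2 h.symm⟩
      · intro p hp
        rw [hs2, mem_cutP G K v hfin] at hp
        exact hp.1.ne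
    obtain ⟨k', hk'⟩ := heven
    have hmemk : k' ∈ {k | ∃ τ'' : V → ℤ, (∀ x, τ'' x = 1 ∨ τ'' x = -1) ∧
        (∀ x ∈ ({w | w ∈ CvSet G K v ∧ w ≠ v ∧ muStarDir G K σ v w ≠ 0} ∪ {v} : Set V),
          τ'' x = (fun x => if x = v then tpsiZ (muStarV G K σ v)
            else muStarDir G K σ v x) x) ∧
        2 * k = {p : V × V | (GvG G K v).Adj p.1 p.2 ∧ τ'' p.1 ≠ τ'' p.2}.ncard} := by
      refine ⟨τ', hτ'1, hτ'b, ?_⟩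
      rw [ncard_cutP G K v hfin τ', ← hs2]
      omega
    have hcle : cutW (GvG G K v)
        ({w | w ∈ CvSet G K v ∧ w ≠ v ∧ muStarDir G K σ v w ≠ 0} ∪ {v})
        (fun x => if x = v then tpsiZ (muStarV G K σ v) else muStarDir G K σ v x) ≤ k' :=
      Nat.sInf_le hmemk
    rw [ncard_cutP G K v hfin τ, ← hs1] at hopt
    omega
  -- final summation
  apply Finset.sum_congr rfl
  intro w hw
  have hadj : G.Adj v w := (SimpleGraph.mem_neighborFinset _ _ _).1 hw
  have hwS : w ∈ CvSet G K v := adj_mem_CvSet G K v hadj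
  have hwv : w ≠ v := hadj.ne'
  have hts := tpsiZ_cases (muStarV G K σ v)
  by_cases hm0 : muStarDir G K σ v w = 0
  · rw [if_neg (by rcases hts with h | h <;> rw [h, hm0] <;> omega :
      ¬ muStarDir G K σ v w = - tpsiZ (muStarV G K σ v))]
    rw [hzero w hadj hm0]
    rcases hτ1 v with h | h <;> rw [h] <;> norm_num
  · have hbw := hτb w (Set.mem_union_left _ ⟨hwS, hwv, hm0⟩)
    rw [if_neg hwv] at hbw
    have hbnd := muStar_bounds G σ K v hσ w
    have hmw : muStarDir G K σ v w = 1 ∨ muStarDir G K σ v w = -1 := by omega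
    rcases hts with h1 | h1 <;> rcases hmw with h2 | h2 <;>
      rw [hτv, hbw, h1, h2] <;> norm_num
end AuxFLC
end
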